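/- arXiv:1710.10112 — 12 statements merged into one kernel-verified Lean document; each statement's English description precedes it below -/
import Mathlib

section
/- For a finite connected graph G, the hyperopic cop number satisfies c_H(G) = 1 if and only if G is a tree. -/
/-- A single move in (reflexive) Cops and Robbers: stay put or move to an adjacent vertex. -/
def CRStep {V : Type*} (G : SimpleGraph V) (u v : V) : Prop := u = v ∨ G.Adj u v

/-- The list of the robber's first `n` positions. -/
def robberHist {V : Type*} (r : ℕ → V) (n : ℕ) : List V := (List.range n).map r

/-- `k` cops have a winning strategy in (perfect-information) Cops and Robbers on `G`.
A cop strategy `F` assigns to every history of robber positions the positions of the `k` cops;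
`F []` is the initial placement of the cops, chosen before the robber picks a start vertex,
and consecutive cop positions must be legal moves.  Given a robber trajectory `r`
(every consecutive pair a legal move), the positions of the cops after their `n`-th move are
`F (robberHist r n)`.  The cops win if at some moment (after a cop move or after a robber
move) some cop occupies the robber's current vertex. -/
def CopsWin {V : Type*} (G : SimpleGraph V) (k : ℕ) : Prop :=
  ∃ F : List V → Fin k → V,
    (∀ l x i, CRStep G (F l i) (F (l ++ [x]) i)) ∧
    ∀ r : ℕ → V, (∀ n, CRStep G (r n) (r (n + 1))) →
      ∃ n, ∃ i, F (robberHist r n) i = r n ∨ F (robberHist r (n + 1)) i = r n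

/-- The cop number of `G`: the least number of cops having a winning strategy. -/
noncomputable def copNumber {V : Type*} (G : SimpleGraph V) : ℕ := sInf {k | CopsWin G k}

open Classical in
/-- The first `n` observations made by hyperopic cops using strategy `F` against the robber
trajectory `r`: after the robber's `n`-th move, the cops (positioned at `F` applied to the
previous observations) see the robber (observation `some (r n)`) unless the robber is
adjacent to every cop (observation `none`). -/
noncomputable def hObsList {V : Type*} (G : SimpleGraph V) {k : ℕ}
    (F : List (Option V) → Fin k → V) (r : ℕ → V) : ℕ → List (Option V)
  | 0 => []
  | n + 1 =>
      hObsList G F r n ++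
        [if ∀ i, G.Adj (F (hObsList G F r n) i) (r n) then none else some (r n)]

/-- `k` cops have a winning strategy in Hyperopic Cops and Robbers on `G`: a strategy
`F`, depending only on the history of observations (the robber being invisible exactly
when adjacent to every cop), which guarantees capture against every robber trajectory. -/
def HCopsWin {V : Type*} (G : SimpleGraph V) (k : ℕ) : Prop :=
  ∃ F : List (Option V) → Fin k → V,
    (∀ l o i, CRStep G (F l i) (F (l ++ [o]) i)) ∧
    ∀ r : ℕ → V, (∀ n, CRStep G (r n) (r (n + 1))) →
      ∃ n, ∃ i, F (hObsList G F r n) i = r n ∨ F (hObsList G F r (n + 1)) i = r n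

/-- The hyperopic cop number of `G`: the least number of cops having a winning strategy
in Hyperopic Cops and Robbers. -/
noncomputable def hyperopicCopNumber {V : Type*} (G : SimpleGraph V) : ℕ :=
  sInf {k | HCopsWin G k}


section AuxProofs

open SimpleGraph Walk

namespace HypAux

private lemma mem_sup_tail {V : Type*} {G : SimpleGraph V} {v x : V} {p : G.Walk v v}
    (hp : ¬p.Nil) : x ∈ p.support ↔ x ∈ p.support.tail := by
  constructor
  · intro hx
    rw [Walk.support_eq_cons] at hx
    rcases List.mem_cons.1 hx with rfl | h
    · cases p with
      | nil => simp at hp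
      | cons h q => simpa [Walk.support_cons] using q.end_mem_support
    · exact h
  · intro hx
    rw [Walk.support_eq_cons]
    exact List.mem_cons_of_mem _ hx

lemma cycle_two_nbrs {V : Type*} {G : SimpleGraph V} {v u : V} (c : G.Walk v v)
    (hc : c.IsCycle) (hu : u ∈ c.support) :
    ∃ a b, a ∈ c.support ∧ b ∈ c.support ∧ a ≠ b ∧ G.Adj u a ∧ G.Adj u b := by
  classical
  have hrot : (c.rotate u hu).IsCycle := hc.rotate hu
  have hsupp : ∀ x, x ∈ (c.rotate u hu).support ↔ x ∈ c.support := by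
    intro x
    rw [mem_sup_tail hrot.not_nil, mem_sup_tail hc.not_nil]
    exact (support_rotate c u hu).mem_iff
  set q := c.rotate u hu with hq
  clear_value q
  clear hq hc hu
  cases q with
  | nil => exact absurd rfl hrot.ne_nil
  | cons h p =>
    rename_i b
    rw [Walk.cons_isCycle_iff] at hrot
    obtain ⟨hp, he⟩ := hrot
    have hbu : b ≠ u := (G.ne_of_adj h).symm
    have hrev : p.reverse.IsPath := hp.reverse
    cases hrev' : p.reverse with
    | nil => exact absurd (Walk.eq_of_length_eq_zero (by rw [← Walk.length_reverse, hrev']; simp)) hbu.symm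
    | cons h2 p2 =>
      rename_i d
      have hdmem : d ∈ p.support := by
        have : d ∈ p.reverse.support := by rw [hrev']; simp
        simpa [Walk.support_reverse] using this
      have hbd : b ≠ d := by
        rintro rfl
        apply he
        have : s(u, b) ∈ p.reverse.edges := by rw [hrev']; simp
        simpa [Walk.edges_reverse, Sym2.eq_swap] using this
      refine ⟨b, d, ?_, ?_, hbd, h, h2⟩
      · rw [← hsupp]; simp [Walk.support_cons, Walk.start_mem_support]
      · rw [← hsupp]; simp [Walk.support_cons, hdmem]

lemma not_hcopswin_one {V : Type*} {G : SimpleGraph V} (h : ¬ G.IsAcyclic) :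
    ¬ HCopsWin G 1 := by
  classical
  rintro ⟨F, hleg, hwin⟩
  unfold SimpleGraph.IsAcyclic at h
  push_neg at h
  obtain ⟨v0, c, hc⟩ := h
  have H : ∀ u ∈ c.support, ∃ ab : V × V, ab.1 ∈ c.support ∧ ab.2 ∈ c.support ∧
      ab.1 ≠ ab.2 ∧ G.Adj u ab.1 ∧ G.Adj u ab.2 := by
    intro u hu
    obtain ⟨a, b, h1, h2, h3, h4, h5⟩ := cycle_two_nbrs c hc hu
    exact ⟨(a, b), h1, h2, h3, h4, h5⟩
  choose! ab hab1 hab2 hab3 hab4 hab5 using H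
  set A : V → V := fun u => (ab u).1 with hA
  set B : V → V := fun u => (ab u).2 with hB
  let obs : List (Option V) → V → Option V := fun L s =>
    if ∀ i, G.Adj (F L i) s then none else some s
  let Good : List (Option V) → V → V → Prop := fun L v s =>
    (s = v ∨ s = A v ∨ s = B v) ∧ s ≠ F L 0 ∧ F (L ++ [obs L s]) 0 ≠ s
  have pick : ∀ L v, v ∈ c.support → ∃ s, Good L v s := by
    intro L v hv
    have hcand : ∀ o, CRStep G (F L 0) (F (L ++ [o]) 0) := fun o => hleg L o 0
    have hAv : A v ≠ v := (G.ne_of_adj (hab4 v hv)).symm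
    have hBv : B v ≠ v := (G.ne_of_adj (hab5 v hv)).symm
    have hAB : A v ≠ B v := hab3 v hv
    by_cases hfar : ∃ s, (s = v ∨ s = A v ∨ s = B v) ∧ s ≠ F L 0 ∧ ¬ G.Adj (F L 0) s
    · obtain ⟨s, hmem, hne, hnadj⟩ := hfar
      refine ⟨s, hmem, hne, fun heq => ?_⟩
      rcases hcand (obs L s) with h' | h'
      · exact hne (heq ▸ h').symm
      · exact hnadj (heq ▸ h')
    · push_neg at hfar
      have h2 : ∃ s1 s2, s1 ≠ s2 ∧ (s1 = v ∨ s1 = A v ∨ s1 = B v) ∧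
          (s2 = v ∨ s2 = A v ∨ s2 = B v) ∧ s1 ≠ F L 0 ∧ s2 ≠ F L 0 := by
        by_cases h0 : v = F L 0
        · exact ⟨A v, B v, hAB, Or.inr (Or.inl rfl), Or.inr (Or.inr rfl),
            h0 ▸ hAv, h0 ▸ hBv⟩
        · by_cases h1 : A v = F L 0
          · refine ⟨v, B v, fun hvB => hBv hvB.symm, Or.inl rfl, Or.inr (Or.inr rfl), h0, ?_⟩
            intro hB0
            exact hAB (h1.trans hB0.symm)
          · exact ⟨v, A v, fun hvA => hAv hvA.symm, Or.inl rfl, Or.inr (Or.inl rfl), h0, h1⟩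
      obtain ⟨s1, s2, h12, hm1, hm2, hn1, hn2⟩ := h2
      have ha1 : G.Adj (F L 0) s1 := hfar s1 hm1 hn1
      have ha2 : G.Adj (F L 0) s2 := hfar s2 hm2 hn2
      have hofix : ∀ s, G.Adj (F L 0) s → obs L s = none := by
        intro s hs
        refine if_pos (fun i => ?_)
        have : i = 0 := Fin.fin_one_eq_zero i
        rw [this]
        exact hs
      by_cases hw : F (L ++ [none]) 0 = s1
      · refine ⟨s2, hm2, hn2, ?_⟩
        rw [hofix s2 ha2, hw]
        exact h12
      · refine ⟨s1, hm1, hn1, ?_⟩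
        rw [hofix s1 ha1]
        exact hw
  let pickF : List (Option V) → V → V := fun L v =>
    if h : ∃ s, Good L v s then h.choose else v
  have pickF_good : ∀ L v, v ∈ c.support → Good L v (pickF L v) := by
    intro L v hv
    have hex := pick L v hv
    simp only [pickF, dif_pos hex]
    exact hex.choose_spec
  let e : ℕ → V × List (Option V) := fun n =>
    Nat.rec (pickF [] v0, ([] : List (Option V)))
      (fun _ s => (pickF (s.2 ++ [obs s.2 s.1]) s.1, s.2 ++ [obs s.2 s.1])) n
  let r : ℕ → V := fun n => (e n).1
  have he2 : ∀ n, (e (n + 1)).2 = (e n).2 ++ [obs (e n).2 (r n)] := fun n => rfl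
  have hr0 : r 0 = pickF [] v0 := rfl
  have hrs : ∀ n, r (n + 1) = pickF ((e n).2 ++ [obs (e n).2 (r n)]) (r n) := fun n => rfl
  have hrS : ∀ n, r n ∈ c.support := by
    have aux : ∀ v, v ∈ c.support → ∀ L, pickF L v ∈ c.support := by
      intro v hv L
      obtain ⟨hmem, -, -⟩ := pickF_good L v hv
      rcases hmem with h' | h' | h' <;> rw [h']
      · exact hv
      · exact hab1 v hv
      · exact hab2 v hv
    intro n
    induction n with
    | zero => exact aux v0 c.start_mem_support []
    | succ m ih => exact aux (r m) ih _
  have k0 : Good [] v0 (r 0) := pickF_good [] v0 c.start_mem_support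
  have ks : ∀ n, Good ((e n).2 ++ [obs (e n).2 (r n)]) (r n) (r (n + 1)) :=
    fun n => pickF_good _ (r n) (hrS n)
  have hcr : ∀ n, CRStep G (r n) (r (n + 1)) := by
    intro n
    obtain ⟨hmem, -, -⟩ := ks n
    rcases hmem with h' | h' | h'
    · exact Or.inl h'.symm
    · exact Or.inr (h' ▸ hab4 (r n) (hrS n))
    · exact Or.inr (h' ▸ hab5 (r n) (hrS n))
  have hhist : ∀ n, hObsList G F r n = (e n).2 := by
    intro n
    induction n with
    | zero => rfl
    | succ m ih =>
      rw [hObsList, ih, he2]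
  obtain ⟨n, i, hcap⟩ := hwin r hcr
  have hi : i = 0 := Fin.fin_one_eq_zero i
  rw [hi] at hcap
  have h1 : F (hObsList G F r n) 0 ≠ r n ∧ F (hObsList G F r (n + 1)) 0 ≠ r n := by
    cases n with
    | zero =>
      obtain ⟨-, hne, hnext⟩ := k0
      constructor
      · rw [hhist 0]
        exact fun hh => hne hh.symm
      · rw [hhist 1]
        exact hnext
    | succ m =>
      obtain ⟨-, hne, hnext⟩ := ks m
      constructor
      · rw [hhist (m + 1), he2]
        exact fun hh => hne hh.symm
      · rw [hhist (m + 2), he2 (m + 1), he2 m]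
        exact hnext
  rcases hcap with hc1 | hc2
  · exact h1.1 hc1
  · exact h1.2 hc2

end HypAux

namespace HypTree

variable {V : Type*} [DecidableEq V] {G : SimpleGraph V}

/-- The unique path between two vertices of a tree. -/
noncomputable def tpath (hT : G.IsTree) (x y : V) : G.Walk x y :=
  (Classical.choice (hT.isConnected.preconnected x y)).toPath

lemma tpath_isPath (hT : G.IsTree) (x y : V) : (tpath hT x y).IsPath :=
  (Classical.choice (hT.isConnected.preconnected x y)).toPath.prop

lemma tpath_eq (hT : G.IsTree) {x y : V} (q : G.Walk x y) (hq : q.IsPath) :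
    q = tpath hT x y :=
  (hT.existsUnique_path x y).unique hq (tpath_isPath hT x y)

lemma tpath_self (hT : G.IsTree) (x : V) : tpath hT x x = Walk.nil :=
  Walk.isPath_iff_eq_nil.1 (tpath_isPath hT x x)

/-- The next vertex on the unique path from `x` to `y`. -/
noncomputable def nxt (hT : G.IsTree) (x y : V) : V := (tpath hT x y).getVert 1

lemma nxt_self (hT : G.IsTree) (x : V) : nxt hT x x = x := by
  rw [nxt, tpath_self]
  rfl

lemma tpath_length_pos (hT : G.IsTree) {x y : V} (hxy : x ≠ y) :
    0 < (tpath hT x y).length :=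
  Nat.pos_of_ne_zero fun h0 => hxy (Walk.eq_of_length_eq_zero h0)

lemma adj_nxt (hT : G.IsTree) {x y : V} (hxy : x ≠ y) : G.Adj x (nxt hT x y) := by
  have := Walk.adj_getVert_succ (tpath hT x y) (tpath_length_pos hT hxy)
  simpa [Walk.getVert_zero, nxt] using this

lemma crstep_nxt (hT : G.IsTree) (x y : V) : CRStep G x (nxt hT x y) := by
  by_cases h : x = y
  · subst h
    exact Or.inl (nxt_self hT x).symm
  · exact Or.inr (adj_nxt hT h)

/-- `Avoid G c x y`: there is a walk from `x` to `y` avoiding `c`. -/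
def Avoid (G : SimpleGraph V) (c x y : V) : Prop := ∃ p : G.Walk x y, c ∉ p.support

lemma avoid_iff (hT : G.IsTree) {c x y : V} :
    Avoid G c x y ↔ c ∉ (tpath hT x y).support := by
  constructor
  · rintro ⟨w, hw⟩
    have hsub := w.support_toPath_subset
    have : (w.toPath : G.Walk x y) = tpath hT x y := tpath_eq hT _ w.toPath.prop
    rw [← this]
    exact fun hc => hw (hsub hc)
  · intro h
    exact ⟨tpath hT x y, h⟩

lemma avoid_symm {c x y : V} (h : Avoid G c x y) : Avoid G c y x := by
  obtain ⟨p, hp⟩ := h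
  exact ⟨p.reverse, by simpa [Walk.support_reverse] using hp⟩

lemma avoid_trans {c x y z : V} (h1 : Avoid G c x y) (h2 : Avoid G c y z) :
    Avoid G c x z := by
  obtain ⟨p, hp⟩ := h1
  obtain ⟨q, hq⟩ := h2
  refine ⟨p.append q, ?_⟩
  rw [Walk.mem_support_append_iff]
  exact fun h => h.elim hp hq

lemma avoid_ne_left {c x y : V} (h : Avoid G c x y) : x ≠ c := by
  obtain ⟨p, hp⟩ := h
  exact fun he => hp (he ▸ p.start_mem_support)

lemma avoid_ne_right {c x y : V} (h : Avoid G c x y) : y ≠ c := by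
  obtain ⟨p, hp⟩ := h
  exact fun he => hp (he ▸ p.end_mem_support)

lemma avoid_refl {c x : V} (hx : x ≠ c) : Avoid G c x x :=
  ⟨Walk.nil, by simp [hx.symm]⟩

lemma avoid_adj {c x y : V} (h : G.Adj x y) (hx : x ≠ c) (hy : y ≠ c) :
    Avoid G c x y :=
  ⟨Walk.cons h Walk.nil, by simp [hx.symm, hy.symm]⟩

lemma avoid_step {c a x y : V} (h : Avoid G c a x) (hs : CRStep G x y) (hy : y ≠ c) :
    Avoid G c a y := by
  rcases hs with rfl | hadj
  · exact h
  · exact avoid_trans h (avoid_adj hadj (avoid_ne_right h) hy)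

/-- If the robber is adjacent to the cop, it is exactly at the next vertex toward its
territory. -/
lemma key1 (hT : G.IsTree) {c t y : V} (hA : Avoid G c t y) (hadj : G.Adj c y) :
    y = nxt hT c t := by
  have h1 : c ∉ (tpath hT y t).support := (avoid_iff hT).1 (avoid_symm hA)
  have hq : (Walk.cons hadj (tpath hT y t)).IsPath := (tpath_isPath hT y t).cons h1
  have he : Walk.cons hadj (tpath hT y t) = tpath hT c t := tpath_eq hT _ hq
  rw [nxt, ← he, Walk.getVert_cons_succ, Walk.getVert_zero]

lemma key2 (hT : G.IsTree) {c x : V} (hx : x ≠ c) : Avoid G c (nxt hT c x) x := by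
  have hcx : c ≠ x := hx.symm
  have hp := tpath_isPath hT c x
  rw [nxt]
  set p := tpath hT c x with hpd
  clear_value p
  cases p with
  | nil => exact absurd rfl hcx
  | cons h q =>
    rw [Walk.getVert_cons_succ, Walk.getVert_zero]
    rw [Walk.cons_isPath_iff] at hp
    exact ⟨q, hp.2⟩

/-- The robber cannot be separated from the cop's new position: anything it can reach
avoiding the advanced cop was already reachable avoiding the old cop. -/
lemma key3 (hT : G.IsTree) {c x y : V} (hx : x ≠ c)
    (h : Avoid G (nxt hT c x) x y) : Avoid G c x y := by
  rw [avoid_iff hT] at h ⊢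
  intro hc
  apply h
  have hq1 : (tpath hT x y).takeUntil c hc |>.IsPath := (tpath_isPath hT x y).takeUntil hc
  have hrev : ((tpath hT x y).takeUntil c hc).reverse.IsPath := hq1.reverse
  have heq : ((tpath hT x y).takeUntil c hc).reverse = tpath hT c x := tpath_eq hT _ hrev
  have hlen : 0 < (tpath hT c x).length := tpath_length_pos hT hx.symm
  have hmem : nxt hT c x ∈ (tpath hT c x).support := by
    rw [Walk.mem_support_iff_exists_getVert]
    exact ⟨1, rfl, by omega⟩
  rw [← heq, Walk.support_reverse, List.mem_reverse] at hmem
  exact (tpath hT x y).support_takeUntil_subset hc hmem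


lemma exists_leaf [Fintype V] (hT : G.IsTree) {x0 y0 : V} (hxy0 : x0 ≠ y0) :
    ∃ c u : V, G.Adj c u ∧ ∀ w, G.Adj c w → w = u := by
  obtain ⟨p, -, hmax⟩ := Finset.exists_max_image (Finset.univ : Finset (V × V))
    (fun q => (tpath hT q.1 q.2).length) ⟨(x0, y0), Finset.mem_univ _⟩
  have hmax' : ∀ q : V × V, (tpath hT q.1 q.2).length ≤ (tpath hT p.1 p.2).length :=
    fun q => hmax q (Finset.mem_univ q)
  set c0 := p.1
  set z0 := p.2
  have hlen : 0 < (tpath hT c0 z0).length :=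
    lt_of_lt_of_le (tpath_length_pos hT hxy0) (hmax' (x0, y0))
  have hc0z0 : c0 ≠ z0 := by
    intro h
    rw [show (tpath hT c0 z0).length = 0 by rw [show z0 = c0 from h.symm, tpath_self]; rfl] at hlen
    omega
  refine ⟨c0, nxt hT c0 z0, adj_nxt hT hc0z0, ?_⟩
  intro w hw
  by_cases hmem : w ∈ (tpath hT c0 z0).support
  · have hsingle : (Walk.cons hw Walk.nil).IsPath := by
      rw [Walk.cons_isPath_iff]
      exact ⟨Walk.IsPath.nil, by simp [G.ne_of_adj hw]⟩
    have ht : (tpath hT c0 z0).takeUntil w hmem = Walk.cons hw Walk.nil := by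
      rw [tpath_eq hT _ ((tpath_isPath hT c0 z0).takeUntil hmem),
        tpath_eq hT _ hsingle]
    have hspec := (tpath hT c0 z0).take_spec hmem
    have : nxt hT c0 z0 = w := by
      rw [nxt, ← hspec, Walk.getVert_append, ht]
      simp [Walk.getVert_zero]
    exact this.symm
  · exfalso
    have hpl : (Walk.cons hw.symm (tpath hT c0 z0)).IsPath :=
      (tpath_isPath hT c0 z0).cons hmem
    have := hmax' (w, z0)
    rw [← tpath_eq hT _ hpl] at this
    simp only [Walk.length_cons] at this
    omega

lemma tree_hcopswin [Fintype V] (hT : G.IsTree) : HCopsWin G 1 := by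
  classical
  by_cases hsub : ∀ x y : V, x = y
  · obtain ⟨v0⟩ := hT.isConnected.nonempty
    exact ⟨fun _ _ => v0, fun l o i => Or.inl rfl,
      fun r hr => ⟨0, 0, Or.inl (hsub v0 (r 0))⟩⟩
  · push_neg at hsub
    obtain ⟨x0, y0, hxy0⟩ := hsub
    obtain ⟨c0, u0, hadj0, hleaf⟩ := exists_leaf hT hxy0
    have hinit : ∀ y : V, y ≠ c0 → Avoid G c0 u0 y := by
      intro y hy
      have h1 : Avoid G c0 (nxt hT c0 y) y := key2 hT hy
      rwa [hleaf _ (adj_nxt hT (Ne.symm hy))] at h1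
    set step : V × V → Option V → V × V := fun s o =>
      match o with
      | none => (nxt hT s.1 s.2, s.2)
      | some x => (nxt hT s.1 x, x) with hstep
    set stF : List (Option V) → V × V := fun l => l.foldl step (c0, u0) with hstF0
    set F : List (Option V) → Fin 1 → V := fun l _ => (stF l).1 with hF
    have hstF : ∀ l o, stF (l ++ [o]) = step (stF l) o := by
      intro l o
      simp [hstF0, List.foldl_append]
    have hlegal : ∀ l o i, CRStep G (F l i) (F (l ++ [o]) i) := by
      intro l o i
      show CRStep G (stF l).1 (stF (l ++ [o])).1
      rw [hstF]
      cases o <;> exact crstep_nxt hT _ _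
    refine ⟨F, hlegal, ?_⟩
    intro r hr
    by_contra hno
    push_neg at hno
    set L : ℕ → List (Option V) := fun n => hObsList G F r n with hL
    set cs : ℕ → V := fun n => (stF (L n)).1 with hcs
    set ts : ℕ → V := fun n => (stF (L n)).2 with hts
    have hno1 : ∀ n, cs n ≠ r n := by
      intro n
      have := (hno n 0).1
      exact this
    have hno2 : ∀ n, cs (n + 1) ≠ r n := by
      intro n
      have := (hno n 0).2
      exact this
    have hLs : ∀ n, L (n + 1) =
        L n ++ [if ∀ i, G.Adj (F (L n) i) (r n) then none else some (r n)] :=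
      fun n => rfl
    have main : ∀ n, Avoid G (cs n) (ts n) (r n) →
        ¬ G.Adj (cs n) (r n) ∧ cs (n + 1) = nxt hT (cs n) (r n) ∧ ts (n + 1) = r n := by
      intro n hA
      have hnadj : ¬ G.Adj (cs n) (r n) := by
        intro hadj
        have hkey := key1 hT hA hadj
        have hcond : ∀ i : Fin 1, G.Adj (F (L n) i) (r n) := fun i => by
          rw [show i = (0 : Fin 1) from Fin.fin_one_eq_zero i]
          exact hadj
        have hcnext : cs (n + 1) = nxt hT (cs n) (ts n) := by
          show (stF (L (n + 1))).1 = _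
          rw [hLs n, if_pos hcond, hstF]
        exact hno2 n (by rw [hcnext, ← hkey])
      have hcond' : ¬ ∀ i : Fin 1, G.Adj (F (L n) i) (r n) := fun hall => hnadj (hall 0)
      refine ⟨hnadj, ?_, ?_⟩
      · show (stF (L (n + 1))).1 = _
        rw [hLs n, if_neg hcond', hstF]
      · show (stF (L (n + 1))).2 = _
        rw [hLs n, if_neg hcond', hstF]
    have inv : ∀ n, Avoid G (cs n) (ts n) (r n) := by
      intro n
      induction n with
      | zero =>
        have h0 : cs 0 = c0 := rfl
        have h0' : ts 0 = u0 := rfl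
        rw [h0, h0']
        exact hinit (r 0) (fun h => hno1 0 (h0.trans h.symm))
      | succ m ih =>
        obtain ⟨hnadj, hc', ht'⟩ := main m ih
        rw [ht']
        have hbase : Avoid G (cs (m + 1)) (r m) (r m) :=
          avoid_refl (fun h => hno2 m h.symm)
        exact avoid_step hbase (hr m) (fun h => hno1 (m + 1) h.symm)
    have hdec : ∀ n, {y | Avoid G (cs (n + 1)) (ts (n + 1)) y}.ncard <
        {y | Avoid G (cs n) (ts n) y}.ncard := by
      intro n
      obtain ⟨hnadj, hc', ht'⟩ := main n (inv n)
      have hx : r n ≠ cs n := fun h => hno1 n h.symm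
      apply Set.ncard_lt_ncard ?_ (Set.toFinite _)
      rw [ht', hc']
      have hsubs : {y | Avoid G (nxt hT (cs n) (r n)) (r n) y} ⊆
          {y | Avoid G (cs n) (ts n) y} := by
        intro y hy
        exact avoid_trans (inv n) (key3 hT hx hy)
      rw [Set.ssubset_iff_of_subset hsubs]
      refine ⟨nxt hT (cs n) (r n), ?_, ?_⟩
      · exact avoid_trans (inv n) (avoid_symm (key2 hT hx))
      · intro hmem
        exact (avoid_ne_right hmem) rfl
    have hmono : ∀ n, {y | Avoid G (cs n) (ts n) y}.ncard + n ≤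
        {y | Avoid G (cs 0) (ts 0) y}.ncard := by
      intro n
      induction n with
      | zero => simp
      | succ m ih =>
        have := hdec m
        omega
    have := hmono ({y | Avoid G (cs 0) (ts 0) y}.ncard + 1)
    omega

end HypTree

end AuxProofs

/-- For a finite connected graph `G`, the hyperopic cop number satisfies
`c_H(G) = 1` if and only if `G` is a tree. -/
theorem hyperopicCopNumber_eq_one_iff_isTree {V : Type*} [Fintype V]
    (G : SimpleGraph V) (hG : G.Connected) :
    hyperopicCopNumber G = 1 ↔ G.IsTree := by
  classical
  have hV : Nonempty V := hG.nonempty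
  have h0 : ¬ HCopsWin G 0 := by
    rintro ⟨F, -, hwin⟩
    obtain ⟨v0⟩ := hV
    obtain ⟨n, i, -⟩ := hwin (fun _ => v0) (fun n => Or.inl rfl)
    exact i.elim0
  constructor
  · intro h1
    by_contra hnt
    have hna : ¬ G.IsAcyclic := fun ha => hnt ⟨hG, ha⟩
    have hne : {k | HCopsWin G k}.Nonempty := by
      by_contra hempty
      rw [Set.not_nonempty_iff_eq_empty] at hempty
      have : hyperopicCopNumber G = 0 := by
        rw [hyperopicCopNumber, hempty, Nat.sInf_empty]
      omega
    have hmem : hyperopicCopNumber G ∈ {k | HCopsWin G k} := Nat.sInf_mem hne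
    rw [h1] at hmem
    exact HypAux.not_hcopswin_one hna hmem
  · intro hTree
    have h1 : HCopsWin G 1 := HypTree.tree_hcopswin hTree
    have hne : {k | HCopsWin G k}.Nonempty := ⟨1, h1⟩
    have hmem : hyperopicCopNumber G ∈ {k | HCopsWin G k} := Nat.sInf_mem hne
    have hle : hyperopicCopNumber G ≤ 1 := Nat.sInf_le h1
    have hnz : hyperopicCopNumber G ≠ 0 := fun h => h0 (h ▸ hmem)
    omega
end

section
/- If a finite connected graph G contains a cut vertex, then c_H(G) ≤ c(G) + 1. -/
namespace HypAux

theorem crstep_refl {V : Type*} (G : SimpleGraph V) (u : V) : CRStep G u u := Or.inl rfl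

theorem robberHist_succ {V : Type*} (r : ℕ → V) (n : ℕ) :
    robberHist r (n+1) = robberHist r n ++ [r n] := by
  simp [robberHist, List.range_succ]

/-- reachability in `G` avoiding vertex `v` -/
def AReach {V : Type*} (G : SimpleGraph V) (v x y : V) : Prop :=
  ∃ p : G.Walk x y, v ∉ p.support

variable {V : Type*} {G : SimpleGraph V} {v x y z : V}

theorem AReach.ne_left (h : AReach G v x y) : x ≠ v := by
  obtain ⟨p, hp⟩ := h
  exact fun hx => hp (hx ▸ p.start_mem_support)

theorem AReach.ne_right (h : AReach G v x y) : y ≠ v := by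
  obtain ⟨p, hp⟩ := h
  exact fun hx => hp (hx ▸ p.end_mem_support)

theorem AReach.refl (hx : x ≠ v) : AReach G v x x :=
  ⟨SimpleGraph.Walk.nil, by simp [hx.symm]⟩

theorem AReach.symm (h : AReach G v x y) : AReach G v y x := by
  obtain ⟨p, hp⟩ := h
  exact ⟨p.reverse, by simpa using hp⟩

theorem AReach.trans (h : AReach G v x y) (h' : AReach G v y z) : AReach G v x z := by
  obtain ⟨p, hp⟩ := h
  obtain ⟨q, hq⟩ := h'
  refine ⟨p.append q, fun hm => ?_⟩
  rcases (SimpleGraph.Walk.mem_support_append_iff _ _).1 hm with h | h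
  · exact hp h
  · exact hq h

theorem AReach.of_adj (hx : x ≠ v) (hy : y ≠ v) (h : G.Adj x y) : AReach G v x y := by
  refine ⟨SimpleGraph.Walk.cons h SimpleGraph.Walk.nil, ?_⟩
  simp [SimpleGraph.Walk.support_cons, hx.symm, hy.symm]

theorem walk_to_induce {a c : V} (p : G.Walk a c) :
    v ∉ p.support → ∀ (ha : a ∈ ({v}ᶜ : Set V)) (hc : c ∈ ({v}ᶜ : Set V)),
      (G.induce ({v}ᶜ : Set V)).Reachable ⟨a, ha⟩ ⟨c, hc⟩ := by
  induction p with
  | nil => intro _ ha hc; exact SimpleGraph.Reachable.refl _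
  | @cons a b c hab q ih =>
      intro hp ha hc
      have hbv : v ∉ q.support := by
        simp only [SimpleGraph.Walk.support_cons, List.mem_cons] at hp
        push_neg at hp
        exact hp.2
      have hb : b ∈ ({v}ᶜ : Set V) := by
        intro h
        exact hbv (h ▸ q.start_mem_support)
      refine SimpleGraph.Reachable.trans ?_ (ih hbv hb hc)
      exact SimpleGraph.Adj.reachable (by simpa using hab)

theorem exists_nbr_areach_aux {a c : V} (p : G.Walk a c) :
    c = v → a ≠ v → ∃ b, G.Adj v b ∧ AReach G v a b := by
  induction p with
  | nil => intro h h'; exact absurd h h'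
  | @cons a b c hab q ih =>
      intro hc ha
      by_cases hb : b = v
      · exact ⟨a, (hb ▸ hab).symm, AReach.refl ha⟩
      · obtain ⟨w, hw, hr⟩ := ih hc hb
        exact ⟨w, hw, (AReach.of_adj ha hb hab).trans hr⟩

theorem exists_nbr_areach (hG : G.Connected) (hy : y ≠ v) :
    ∃ b, G.Adj v b ∧ AReach G v y b := by
  obtain ⟨p⟩ := hG y v
  exact exists_nbr_areach_aux p rfl hy


section Strat

variable {V : Type*} {k : ℕ}

open Classical in
noncomputable def fstv (v : V) (l : List (Option V)) : Option V :=
  match l[0]? with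
  | some (some x) => if x = v then none else some x
  | _ => none

open Classical in
noncomputable def sndv (v : V) (l : List (Option V)) : Option V :=
  match l[1]? with
  | some (some x) => if x = v then none else some x
  | _ => none

noncomputable def bfun (v b₂ : V) (bl : V → V) (l : List (Option V)) : V :=
  match fstv v l with
  | some x => bl x
  | none =>
    match sndv v l with
    | some x => bl x
    | none => b₂

def vhist (v : V) (L : ℕ) (l : List (Option V)) : List V :=
  (l.drop (3+L)).map (fun o => o.getD v)

noncomputable def mainPos (v : V) (F : List V → Fin k → V) (W : Fin k → ℕ → V) (L : ℕ)
    (l : List (Option V)) (i : Fin k) : V :=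
  if l.length ≤ 3 then v
  else if l.length < 3 + L then W i (l.length - 3)
  else F (vhist v L l) i

open Classical in
noncomputable def parkedPos (v b₁ b₂ : V) (bl : V → V) (l : List (Option V)) : V :=
  if l.length = 0 then v
  else
    match fstv v l with
    | some _ => bfun v b₂ bl l
    | none =>
      if l.length = 1 then b₁
      else if l.length = 2 then (if bfun v b₂ bl l = b₁ then b₁ else v)
      else bfun v b₂ bl l

def badA (v : V) (l : List (Option V)) (n : ℕ) : Prop :=
  3 ≤ n ∧ ∃ o, l[n]? = some o ∧ (o = none ∨ o = some v)

open Classical in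
noncomputable def P (v b₁ b₂ : V) (bl : V → V) (F : List V → Fin k → V)
    (W : Fin k → ℕ → V) (L : ℕ) (l : List (Option V)) (i : Fin (k+1)) : V :=
  if hkill : ∃ n, badA v l n then
    if h : (i:ℕ) < k then mainPos v F W L (l.take (Nat.find hkill)) ⟨i,h⟩ else v
  else
    if h : (i:ℕ) < k then mainPos v F W L l ⟨i,h⟩ else parkedPos v b₁ b₂ bl l

variable {v b₁ b₂ : V} {bl : V → V} {F : List V → Fin k → V} {W : Fin k → ℕ → V} {L : ℕ}
variable {l : List (Option V)} {o : Option V}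

theorem getElem?_append_lt {n : ℕ} (h : n < l.length) : (l ++ [o])[n]? = l[n]? := by
  rw [List.getElem?_append, if_pos h]

theorem fstv_append (h : l ≠ []) : fstv v (l ++ [o]) = fstv v l := by
  have : 0 < l.length := List.length_pos_iff.2 h
  simp only [fstv, getElem?_append_lt this]

theorem sndv_append (h : 2 ≤ l.length) : sndv v (l ++ [o]) = sndv v l := by
  have : 1 < l.length := h
  simp [sndv, getElem?_append_lt this]

theorem bfun_append_of_fstv {x : V} (h : l ≠ []) (hx : fstv v l = some x) :
    bfun v b₂ bl (l ++ [o]) = bfun v b₂ bl l := by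
  simp [bfun, fstv_append h, hx]

theorem bfun_append (h : 2 ≤ l.length) :
    bfun v b₂ bl (l ++ [o]) = bfun v b₂ bl l := by
  have h0 : l ≠ [] := by rintro rfl; simp at h
  simp [bfun, fstv_append h0, sndv_append h]

theorem badA_lt (h : badA v l n) : n < l.length := by
  obtain ⟨-, o, ho, -⟩ := h
  exact (List.getElem?_eq_some_iff.1 ho).1

theorem badA_append_iff {n : ℕ} (h : n < l.length) : badA v (l ++ [o]) n ↔ badA v l n := by
  unfold badA
  rw [getElem?_append_lt h]

theorem adj_bfun {G : SimpleGraph V} (hb2 : G.Adj v b₂) (hbl : ∀ x, G.Adj v (bl x)) (l : List (Option V)) :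
    G.Adj v (bfun v b₂ bl l) := by
  unfold bfun
  rcases fstv v l with _ | x
  · rcases sndv v l with _ | x
    · exact hb2
    · exact hbl x
  · exact hbl x

end Strat

section Step

variable {V : Type*} {k : ℕ} {G : SimpleGraph V}
variable {v b₁ b₂ : V} {bl : V → V} {F : List V → Fin k → V} {W : Fin k → ℕ → V} {L : ℕ}
variable {l : List (Option V)} {o : Option V} {i : Fin k} {x : V}

theorem vhist_append (h : 3 + L ≤ l.length) :
    vhist v L (l ++ [o]) = vhist v L l ++ [o.getD v] := by
  unfold vhist
  rw [List.drop_append_of_le_length h, List.map_append]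
  rfl

theorem vhist_of_le (h : l.length ≤ 3 + L) : vhist v L l = [] := by
  unfold vhist
  rw [List.drop_eq_nil_iff.2 h]
  rfl

theorem mainPos_small (h : l.length ≤ 3) : mainPos v F W L l i = v := by
  unfold mainPos; rw [if_pos h]

theorem mainPos_mid (h1 : 3 < l.length) (h2 : l.length < 3 + L) :
    mainPos v F W L l i = W i (l.length - 3) := by
  unfold mainPos; rw [if_neg (show ¬ l.length ≤ 3 by omega), if_pos h2]

theorem mainPos_big (hL : 1 ≤ L) (h : 3 + L ≤ l.length) :
    mainPos v F W L l i = F (vhist v L l) i := by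
  unfold mainPos
  rw [if_neg (show ¬ l.length ≤ 3 by omega), if_neg (show ¬ l.length < 3 + L by omega)]

theorem parkedPos_zero (h : l.length = 0) : parkedPos v b₁ b₂ bl l = v := by
  unfold parkedPos; rw [if_pos h]

theorem parkedPos_fst (h0 : l.length ≠ 0) (hf : fstv v l = some x) :
    parkedPos v b₁ b₂ bl l = bfun v b₂ bl l := by
  unfold parkedPos; rw [if_neg h0, hf]

theorem parkedPos_one (h : l.length = 1) (hf : fstv v l = none) :
    parkedPos v b₁ b₂ bl l = b₁ := by
  unfold parkedPos; rw [if_neg (by omega), hf, if_pos h]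

theorem parkedPos_two_eq (h : l.length = 2) (hf : fstv v l = none)
    (hbb : bfun v b₂ bl l = b₁) : parkedPos v b₁ b₂ bl l = b₁ := by
  unfold parkedPos; rw [if_neg (by omega), hf, if_neg (by omega), if_pos h, if_pos hbb]

theorem parkedPos_two_ne (h : l.length = 2) (hf : fstv v l = none)
    (hbb : ¬ bfun v b₂ bl l = b₁) : parkedPos v b₁ b₂ bl l = v := by
  unfold parkedPos; rw [if_neg (by omega), hf, if_neg (by omega), if_pos h, if_neg hbb]

theorem parkedPos_big (h : 3 ≤ l.length) (hf : fstv v l = none) :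
    parkedPos v b₁ b₂ bl l = bfun v b₂ bl l := by
  unfold parkedPos; rw [if_neg (by omega), hf, if_neg (by omega), if_neg (by omega)]


theorem mainPos_step (hF1 : ∀ l x i, CRStep G (F l i) (F (l ++ [x]) i))
    (hW0 : ∀ i, W i 0 = v) (hWs : ∀ i j, CRStep G (W i j) (W i (j+1)))
    (hWL : ∀ i, W i L = F [] i) (hL : 1 ≤ L)
    (l : List (Option V)) (o : Option V) (i : Fin k) :
    CRStep G (mainPos v F W L l i) (mainPos v F W L (l ++ [o]) i) := by
  have hlen : (l ++ [o]).length = l.length + 1 := by simp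
  rcases le_or_gt (l.length + 1) 3 with h1 | h1
  · rw [mainPos_small (by omega), mainPos_small (by omega)]
    exact crstep_refl G v
  · rcases le_or_gt l.length 3 with h2 | h2
    · -- l.length = 3
      have h3 : l.length = 3 := by omega
      rw [mainPos_small h2]
      by_cases h4 : l.length + 1 < 3 + L
      · rw [mainPos_mid (by omega) (by omega), hlen, h3]
        have := hWs i 0
        rwa [hW0 i] at this
      · have hL1 : L = 1 := by omega
        rw [mainPos_big hL (by omega), vhist_of_le (by omega)]
        have h7 := hWs i 0
        rw [hW0 i] at h7
        have h8 : W i (0+1) = F [] i := by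
          rw [show (0+1 : ℕ) = L by omega, hWL i]
        rw [h8] at h7
        exact h7
    · by_cases h4 : l.length + 1 < 3 + L
      · rw [mainPos_mid h2 (by omega), mainPos_mid (by omega) (by omega), hlen]
        have h5 : l.length + 1 - 3 = (l.length - 3) + 1 := by omega
        rw [h5]
        exact hWs i _
      · by_cases h5 : l.length < 3 + L
        · rw [mainPos_mid h2 h5, mainPos_big hL (by omega), vhist_of_le (by omega)]
          have h6 : l.length - 3 + 1 = L := by omega
          have := hWs i (l.length - 3)
          rw [h6, hWL i] at this
          exact this
        · rw [mainPos_big hL (by omega), mainPos_big hL (by omega), vhist_append (by omega)]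
          exact hF1 _ _ _

theorem parkedPos_step (hb1 : G.Adj v b₁) (hb2 : G.Adj v b₂) (hbl : ∀ x, G.Adj v (bl x))
    (l : List (Option V)) (o : Option V) :
    CRStep G (parkedPos v b₁ b₂ bl l) (parkedPos v b₁ b₂ bl (l ++ [o])) := by
  have hlen : (l ++ [o]).length = l.length + 1 := by simp
  have hadjb : ∀ l' : List (Option V), G.Adj v (bfun v b₂ bl l') := adj_bfun hb2 hbl
  rcases Nat.eq_zero_or_pos l.length with h0 | h0
  · rw [parkedPos_zero h0]
    rcases hf : fstv v (l ++ [o]) with _ | x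
    · rw [parkedPos_one (by omega) hf]
      exact Or.inr hb1
    · rw [parkedPos_fst (by omega) hf]
      exact Or.inr (hadjb _)
  · have hne : l ≠ [] := by intro h; rw [h] at h0; simp at h0
    rcases hf : fstv v l with _ | x
    · -- probe branch
      have hf' : fstv v (l ++ [o]) = none := (fstv_append hne).trans hf
      rcases Nat.lt_or_ge l.length 2 with h2 | h2
      · have h1 : l.length = 1 := by omega
        rw [parkedPos_one h1 hf]
        by_cases hbb : bfun v b₂ bl (l ++ [o]) = b₁
        · rw [parkedPos_two_eq (by omega) hf' hbb]; exact crstep_refl G b₁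
        · rw [parkedPos_two_ne (by omega) hf' hbb]; exact Or.inr hb1.symm
      · rcases Nat.lt_or_ge l.length 3 with h3 | h3
        · have h2' : l.length = 2 := by omega
          rw [parkedPos_big (by omega) hf', bfun_append h2]
          by_cases hbb : bfun v b₂ bl l = b₁
          · rw [parkedPos_two_eq h2' hf hbb, hbb]; exact crstep_refl G b₁
          · rw [parkedPos_two_ne h2' hf hbb]; exact Or.inr (hadjb l)
        · rw [parkedPos_big h3 hf, parkedPos_big (by omega) hf', bfun_append h2]
          exact crstep_refl G _
    · have hf' : fstv v (l ++ [o]) = some x := (fstv_append hne).trans hf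
      rw [parkedPos_fst (by omega) hf, parkedPos_fst (by omega) hf',
        bfun_append_of_fstv hne hf]
      exact crstep_refl G _

end Step

section PStep

variable {V : Type*} {k : ℕ} {G : SimpleGraph V}
variable {v b₁ b₂ : V} {bl : V → V} {F : List V → Fin k → V} {W : Fin k → ℕ → V} {L : ℕ}

open Classical in
theorem P_main {l : List (Option V)} (hnk : ¬∃ n, badA v l n) {i : Fin (k+1)}
    (h : (i : ℕ) < k) : P v b₁ b₂ bl F W L l i = mainPos v F W L l ⟨i, h⟩ := by
  unfold P; rw [dif_neg hnk, dif_pos h]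

open Classical in
theorem P_parked {l : List (Option V)} (hnk : ¬∃ n, badA v l n) {i : Fin (k+1)}
    (h : ¬ (i : ℕ) < k) : P v b₁ b₂ bl F W L l i = parkedPos v b₁ b₂ bl l := by
  unfold P; rw [dif_neg hnk, dif_neg h]

open Classical in
theorem P_kill_parked {l : List (Option V)} (hk : ∃ n, badA v l n) {i : Fin (k+1)}
    (h : ¬ (i : ℕ) < k) : P v b₁ b₂ bl F W L l i = v := by
  unfold P; rw [dif_pos hk, dif_neg h]

open Classical in
theorem P_kill_main {l : List (Option V)} (hk : ∃ n, badA v l n) {i : Fin (k+1)}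
    (h : (i : ℕ) < k) :
    P v b₁ b₂ bl F W L l i = mainPos v F W L (l.take (Nat.find hk)) ⟨i, h⟩ := by
  unfold P; rw [dif_pos hk, dif_pos h]

open Classical in
theorem P_step (hF1 : ∀ l x i, CRStep G (F l i) (F (l ++ [x]) i))
    (hW0 : ∀ i, W i 0 = v) (hWs : ∀ i j, CRStep G (W i j) (W i (j+1)))
    (hWL : ∀ i, W i L = F [] i) (hL : 1 ≤ L)
    (hb1 : G.Adj v b₁) (hb2 : G.Adj v b₂) (hbl : ∀ x, G.Adj v (bl x)) :
    ∀ (l : List (Option V)) (o : Option V) (i : Fin (k+1)),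
      CRStep G (P v b₁ b₂ bl F W L l i) (P v b₁ b₂ bl F W L (l ++ [o]) i) := by
  intro l o i
  have hadjb : ∀ l' : List (Option V), G.Adj v (bfun v b₂ bl l') := adj_bfun hb2 hbl
  by_cases hk1 : ∃ n, badA v l n
  · have hsp := Nat.find_spec hk1
    have hlt1 : Nat.find hk1 < l.length := badA_lt hsp
    have hk2 : ∃ n, badA v (l ++ [o]) n :=
      ⟨Nat.find hk1, (badA_append_iff hlt1).2 hsp⟩
    have hle : Nat.find hk2 ≤ Nat.find hk1 := Nat.find_le ((badA_append_iff hlt1).2 hsp)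
    have hlt2 : Nat.find hk2 < l.length := lt_of_le_of_lt hle hlt1
    have hfind : Nat.find hk2 = Nat.find hk1 :=
      le_antisymm hle (Nat.find_le ((badA_append_iff hlt2).1 (Nat.find_spec hk2)))
    by_cases h : (i : ℕ) < k
    · rw [P_kill_main hk1 h, P_kill_main hk2 h, hfind,
        List.take_append_of_le_length (le_of_lt hlt1)]
      exact crstep_refl G _
    · rw [P_kill_parked hk1 h, P_kill_parked hk2 h]
      exact crstep_refl G v
  · by_cases hk2 : ∃ n, badA v (l ++ [o]) n
    · have h2 := Nat.find_spec hk2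
      have hlt : Nat.find hk2 < l.length + 1 := by
        have := badA_lt h2
        simpa using this
      have heq : Nat.find hk2 = l.length := by
        rcases Nat.lt_or_ge (Nat.find hk2) l.length with hl | hl
        · exact absurd ⟨Nat.find hk2, (badA_append_iff hl).1 h2⟩ hk1
        · omega
      have h3 : 3 ≤ l.length := heq ▸ h2.1
      by_cases h : (i : ℕ) < k
      · rw [P_main hk1 h, P_kill_main hk2 h, heq, List.take_left]
        exact crstep_refl G _
      · rw [P_parked hk1 h, P_kill_parked hk2 h]
        rcases hf : fstv v l with _ | x
        · rw [parkedPos_big h3 hf]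
          exact Or.inr (hadjb l).symm
        · rw [parkedPos_fst (by omega) hf]
          exact Or.inr (hadjb l).symm
    · by_cases h : (i : ℕ) < k
      · rw [P_main hk1 h, P_main hk2 h]
        exact mainPos_step hF1 hW0 hWs hWL hL l o _
      · rw [P_parked hk1 h, P_parked hk2 h]
        exact parkedPos_step hb1 hb2 hbl l o

end PStep

section Obs

variable {V : Type*} {κ : ℕ}

open Classical in
noncomputable def obsf {V : Type*} {κ : ℕ} (G : SimpleGraph V)
    (Ff : List (Option V) → Fin κ → V) (r : ℕ → V) (n : ℕ) : Option V :=
  if ∀ i, G.Adj (Ff (hObsList G Ff r n) i) (r n) then none else some (r n)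

theorem hObsList_succ (G : SimpleGraph V) (Ff : List (Option V) → Fin κ → V)
    (r : ℕ → V) (n : ℕ) :
    hObsList G Ff r (n+1) = hObsList G Ff r n ++ [obsf G Ff r n] := by
  rw [hObsList, obsf]

theorem hObsList_length (G : SimpleGraph V) (Ff : List (Option V) → Fin κ → V)
    (r : ℕ → V) (n : ℕ) : (hObsList G Ff r n).length = n := by
  induction n with
  | zero => rfl
  | succ n ih => rw [hObsList_succ]; simp [ih]

theorem hObsList_get (G : SimpleGraph V) (Ff : List (Option V) → Fin κ → V)
    (r : ℕ → V) {j n : ℕ} (h : j < n) :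
    (hObsList G Ff r n)[j]? = some (obsf G Ff r j) := by
  induction n with
  | zero => omega
  | succ n ih =>
      rw [hObsList_succ]
      rcases Nat.lt_or_ge j n with h' | h'
      · rw [List.getElem?_append, if_pos (by rw [hObsList_length]; exact h')]
        exact ih h'
      · have hj : j = n := by omega
        subst hj
        rw [List.getElem?_append, hObsList_length]
        simp

theorem obsf_invisible {G : SimpleGraph V} {Ff : List (Option V) → Fin κ → V}
    {r : ℕ → V} {n : ℕ} (h : obsf G Ff r n = none) :
    ∀ i, G.Adj (Ff (hObsList G Ff r n) i) (r n) := by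
  rw [obsf] at h
  by_contra hc
  rw [if_neg hc] at h
  exact Option.some_ne_none _ h

theorem obsf_eq_none {G : SimpleGraph V} {Ff : List (Option V) → Fin κ → V}
    {r : ℕ → V} {n : ℕ} (h : ∀ i, G.Adj (Ff (hObsList G Ff r n) i) (r n)) :
    obsf G Ff r n = none := by
  rw [obsf, if_pos h]

theorem obsf_eq_some {G : SimpleGraph V} {Ff : List (Option V) → Fin κ → V}
    {r : ℕ → V} {n : ℕ} (h : ¬ ∀ i, G.Adj (Ff (hObsList G Ff r n) i) (r n)) :
    obsf G Ff r n = some (r n) := by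
  rw [obsf, if_neg h]

theorem obsf_cases (G : SimpleGraph V) (Ff : List (Option V) → Fin κ → V)
    (r : ℕ → V) (n : ℕ) : obsf G Ff r n = none ∨ obsf G Ff r n = some (r n) := by
  rw [obsf]
  split
  · exact Or.inl rfl
  · exact Or.inr rfl

end Obs

section MoreCompute

variable {V : Type*} {k : ℕ}
variable {v b₁ b₂ x : V} {bl : V → V} {l : List (Option V)}

theorem fstv_some (h0 : l[0]? = some (some x)) (hx : x ≠ v) : fstv v l = some x := by
  simp [fstv, h0, hx]

theorem fstv_none_of (h0 : l[0]? = some none) : fstv v l = none := by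
  simp [fstv, h0]

theorem sndv_some (h1 : l[1]? = some (some x)) (hx : x ≠ v) : sndv v l = some x := by
  simp [sndv, h1, hx]

theorem sndv_none_of (h1 : l[1]? = some none) : sndv v l = none := by
  simp [sndv, h1]

theorem bfun_of_fst (hf : fstv v l = some x) : bfun v b₂ bl l = bl x := by
  simp [bfun, hf]

theorem bfun_of_snd (hf : fstv v l = none) (hs : sndv v l = some x) :
    bfun v b₂ bl l = bl x := by
  simp [bfun, hf, hs]

theorem bfun_of_none (hf : fstv v l = none) (hs : sndv v l = none) :
    bfun v b₂ bl l = b₂ := by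
  simp [bfun, hf, hs]

theorem parkedPos_ge3 (h : 3 ≤ l.length) :
    parkedPos v b₁ b₂ bl l = bfun v b₂ bl l := by
  rcases hf : fstv v l with _ | x
  · exact parkedPos_big h hf
  · exact parkedPos_fst (by omega) hf

end MoreCompute

section Win

variable {V : Type*} {k : ℕ} {G : SimpleGraph V}
variable {v b₁ b₂ : V} {bl : V → V} {F : List V → Fin k → V} {W : Fin k → ℕ → V} {L : ℕ}

open Classical in
theorem P_win
    (hF1 : ∀ l x i, CRStep G (F l i) (F (l ++ [x]) i))
    (hF2 : ∀ r : ℕ → V, (∀ n, CRStep G (r n) (r (n + 1))) →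
      ∃ n, ∃ i, F (robberHist r n) i = r n ∨ F (robberHist r (n + 1)) i = r n)
    (hW0 : ∀ i, W i 0 = v) (hWs : ∀ i j, CRStep G (W i j) (W i (j+1)))
    (hWL : ∀ i, W i L = F [] i) (hL : 1 ≤ L)
    (hb1 : G.Adj v b₁) (hb2 : G.Adj v b₂) (hbl : ∀ x, G.Adj v (bl x))
    (hbb : ¬ AReach G v b₁ b₂)
    (hblr : ∀ x, ¬ AReach G v x (bl x))
    (r : ℕ → V) (hr : ∀ n, CRStep G (r n) (r (n + 1))) :
    ∃ n, ∃ i, P v b₁ b₂ bl F W L (hObsList G (P v b₁ b₂ bl F W L) r n) i = r n ∨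
      P v b₁ b₂ bl F W L (hObsList G (P v b₁ b₂ bl F W L) r (n + 1)) i = r n := by
  by_contra hcon
  push_neg at hcon
  set Pf : List (Option V) → Fin (k+1) → V := P v b₁ b₂ bl F W L with hPf
  set ho : ℕ → List (Option V) := hObsList G Pf r with hho
  set ob : ℕ → Option V := obsf G Pf r with hob
  have hcon' : ∀ (n : ℕ) (i : Fin (k+1)), Pf (ho n) i ≠ r n ∧ Pf (ho (n+1)) i ≠ r n :=
    fun n i => hcon n i
  -- k is positive
  have hk1 : 0 < k := by
    obtain ⟨n, i, -⟩ := hF2 (fun _ => v) (fun n => crstep_refl G v)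
    exact i.pos
  have main0 : Fin (k+1) := ⟨0, by omega⟩
  have hlen : ∀ n, (ho n).length = n := hObsList_length G Pf r
  have hget : ∀ {j n : ℕ}, j < n → (ho n)[j]? = some (ob j) :=
    fun h => hObsList_get G Pf r h
  have hsucc : ∀ n, ho (n+1) = ho n ++ [ob n] := hObsList_succ G Pf r
  -- no kill for small lists
  have hnk_small : ∀ n, n ≤ 3 → ¬∃ m, badA v (ho n) m := by
    rintro n hn ⟨m, hm3, o, hgo, -⟩
    have := (List.getElem?_eq_some_iff.1 hgo).1
    rw [hlen] at this
    omega
  -- initial positions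
  have hnk0 : ¬∃ m, badA v (ho 0) m := hnk_small 0 (by omega)
  have hpos_small : ∀ n, n ≤ 3 → (¬∃ m, badA v (ho n) m) → ∀ (i : Fin (k+1)),
      (i : ℕ) < k → Pf (ho n) i = v := by
    intro n hn hnk i hik
    rw [hPf, P_main hnk hik, mainPos_small (by rw [hlen]; exact hn)]
  have hpos0 : ∀ i, Pf (ho 0) i = v := by
    intro i
    by_cases hik : (i : ℕ) < k
    · exact hpos_small 0 (by omega) hnk0 i hik
    · rw [hPf, P_parked hnk0 hik, parkedPos_zero (hlen 0)]
  have r0nv : r 0 ≠ v := fun h => (hcon' 0 ⟨k, by omega⟩).1 ((hpos0 _).trans h.symm)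
  -- scenario analysis
  obtain ⟨t₀, B, ht₀, hrt₀, hBr, hbfun⟩ :
      ∃ (t₀ : ℕ) (B : V), t₀ ≤ 1 ∧ r t₀ ≠ v ∧ ¬ AReach G v (r t₀) B ∧
        (∀ n, 2 ≤ n → bfun v b₂ bl (ho n) = B) := by
    by_cases hc0 : ∀ i, G.Adj (Pf (ho 0) i) (r 0)
    · -- invisible at time 0: probe scenario
      have ho0 : ob 0 = none := obsf_eq_none hc0
      have hfst : ∀ n, 1 ≤ n → fstv v (ho n) = none := by
        intro n hn
        exact fstv_none_of (by rw [hget hn, ho0])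
      have hr1v : r 1 ≠ v := by
        intro h
        exact (hcon' 1 ⟨0, by omega⟩).1
          ((hpos_small 1 (by omega) (hnk_small 1 (by omega)) _ hk1).trans h.symm)
      have hpark1 : Pf (ho 1) ⟨k, by omega⟩ = b₁ := by
        rw [hPf, P_parked (hnk_small 1 (by omega)) (lt_irrefl k),
          parkedPos_one (hlen 1) (hfst 1 le_rfl)]
      by_cases hc1 : ∀ i, G.Adj (Pf (ho 1) i) (r 1)
      · have ho1 : ob 1 = none := obsf_eq_none hc1
        have hadj : G.Adj b₁ (r 1) := hpark1 ▸ hc1 ⟨k, by omega⟩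
        have hR1 : AReach G v (r 1) b₁ := (AReach.of_adj hb1.ne' hr1v hadj).symm
        refine ⟨1, b₂, le_rfl, hr1v, ?_, ?_⟩
        · intro h
          exact hbb (hR1.symm.trans h)
        · intro n hn
          exact bfun_of_none (hfst n (by omega))
            (sndv_none_of (by rw [hget (show 1 < n by omega), ho1]))
      · have ho1 : ob 1 = some (r 1) := obsf_eq_some hc1
        refine ⟨1, bl (r 1), le_rfl, hr1v, hblr _, ?_⟩
        intro n hn
        exact bfun_of_snd (hfst n (by omega))
          (sndv_some (by rw [hget (show 1 < n by omega), ho1]) hr1v)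
    · have ho0 : ob 0 = some (r 0) := obsf_eq_some hc0
      refine ⟨0, bl (r 0), by omega, r0nv, hblr _, ?_⟩
      intro n hn
      exact bfun_of_fst (fstv_some (by rw [hget (show 0 < n by omega), ho0]) r0nv)
  have hBadj : G.Adj v B := by
    have := adj_bfun (bl := bl) hb2 hbl (ho 2)
    rwa [hbfun 2 (by omega)] at this
  -- confinement and visibility
  have key : ∀ n, t₀ ≤ n → r n ≠ v ∧ ¬ AReach G v (r n) B ∧
      (3 ≤ n → ob n = some (r n)) := by
    intro n
    induction n using Nat.strong_induction_on with
    | _ n IH =>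
      intro hn
      have allgood : ∀ j, 3 ≤ j → j < n → ob j = some (r j) ∧ r j ≠ v := by
        intro j h3 hj
        obtain ⟨h1, h2, h3'⟩ := IH j hj (by omega)
        exact ⟨h3' h3, h1⟩
      have hnk : ∀ m, m ≤ n → ¬∃ j, badA v (ho m) j := by
        rintro m hm ⟨j, hj3, o, hgo, hbad⟩
        have hjm : j < m := by
          have := (List.getElem?_eq_some_iff.1 hgo).1
          rwa [hlen] at this
        rw [hget hjm] at hgo
        obtain ⟨hg, hnv⟩ := allgood j hj3 (by omega)
        rw [hg] at hgo
        obtain rfl : some (r j) = o := by injection hgo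
        rcases hbad with h | h
        · exact Option.some_ne_none _ h
        · exact hnv (by injection h)
      have rnv : r n ≠ v := by
        intro hv
        rcases Nat.lt_or_ge n 3 with h3 | h3
        · exact (hcon' n ⟨0, by omega⟩).1
            ((hpos_small n (by omega) (hnk n le_rfl) _ hk1).trans hv.symm)
        · have hbadn : badA v (ho (n+1)) n := by
            refine ⟨h3, ob n, hget (by omega), ?_⟩
            rcases obsf_cases G Pf r n with h | h
            · exact Or.inl h
            · refine Or.inr ?_
              have : ob n = some (r n) := h
              rw [this, hv]
          have hpk : Pf (ho (n+1)) ⟨k, by omega⟩ = v := by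
            rw [hPf, P_kill_parked ⟨n, hbadn⟩ (lt_irrefl k)]
          exact (hcon' n ⟨k, by omega⟩).2 (hpk.trans hv.symm)
      have hAR : ¬ AReach G v (r n) B := by
        rcases Nat.eq_or_lt_of_le hn with he | hlt
        · rw [← he]
          exact hBr
        · have hm := IH (n-1) (by omega) (by omega)
          have hstep := hr (n-1)
          rw [show n - 1 + 1 = n by omega] at hstep
          rcases hstep with heq | hadj
          · rw [← heq]
            exact hm.2.1
          · intro h
            exact hm.2.1 ((AReach.of_adj hm.1 rnv hadj).trans h)
      refine ⟨rnv, hAR, ?_⟩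
      intro h3
      have hpark : Pf (ho n) ⟨k, by omega⟩ = B := by
        rw [hPf, P_parked (hnk n le_rfl) (lt_irrefl k),
          parkedPos_ge3 (by rw [hlen]; exact h3), hbfun n (by omega)]
      have hinv : ¬ ∀ i, G.Adj (Pf (ho n) i) (r n) := by
        intro hall
        have hadj : G.Adj B (r n) := hpark ▸ hall ⟨k, by omega⟩
        exact hAR (AReach.of_adj hBadj.ne' rnv hadj).symm
      exact obsf_eq_some hinv
  -- no kill ever
  have nokill : ∀ n, ¬∃ m, badA v (ho n) m := by
    rintro n ⟨m, hm3, o, hgo, hbad⟩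
    have hmn : m < n := by
      have := (List.getElem?_eq_some_iff.1 hgo).1
      rwa [hlen] at this
    rw [hget hmn] at hgo
    obtain ⟨hm1, -, hm3'⟩ := key m (by omega)
    rw [hm3' hm3] at hgo
    obtain rfl : some (r m) = o := by injection hgo
    rcases hbad with h | h
    · exact Option.some_ne_none _ h
    · exact hm1 (by injection h)
  -- endgame
  have hvh : ∀ m, vhist v L (ho (3 + L + m)) = robberHist (fun j => r (3 + L + j)) m := by
    intro m
    induction m with
    | zero =>
        rw [vhist_of_le (by rw [hlen]; omega)]
        simp [robberHist]
    | succ m ih =>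
        rw [show 3 + L + (m+1) = (3 + L + m) + 1 by omega, hsucc,
          vhist_append (by rw [hlen]; omega), ih,
          (key (3 + L + m) (by omega)).2.2 (by omega), robberHist_succ]
        rfl
  obtain ⟨m, i0, hwin⟩ := hF2 (fun j => r (3 + L + j)) (by
    intro n
    have := hr (3 + L + n)
    rwa [show 3 + L + n + 1 = 3 + L + (n+1) by omega] at this)
  have hI : ((⟨(i0 : ℕ), by omega⟩ : Fin (k+1)) : ℕ) < k := i0.2
  have hmain : ∀ m', Pf (ho (3 + L + m')) ⟨(i0 : ℕ), by omega⟩ =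
      F (robberHist (fun j => r (3 + L + j)) m') i0 := by
    intro m'
    rw [hPf, P_main (nokill _) hI, mainPos_big hL (by rw [hlen]; omega), hvh m']
  rcases hwin with h | h
  · exact (hcon' (3 + L + m) ⟨(i0 : ℕ), by omega⟩).1 ((hmain m).trans h)
  · refine (hcon' (3 + L + m) ⟨(i0 : ℕ), by omega⟩).2 ?_
    have := hmain (m + 1)
    rw [show 3 + L + (m+1) = (3 + L + m) + 1 by omega] at this
    exact this.trans h

end Win


theorem copsWin_card {V : Type*} [Fintype V] [Nonempty V] (G : SimpleGraph V) :
    CopsWin G (Fintype.card V) := by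
  refine ⟨fun _ i => (Fintype.equivFin V).symm i, fun l x i => crstep_refl G _, ?_⟩
  intro r hr
  exact ⟨0, Fintype.equivFin V (r 0), Or.inl (by simp)⟩

theorem hcopswin_of_sep {V : Type*} (G : SimpleGraph V) (hG : G.Connected)
    (v y₁ y₂ : V) (h1 : y₁ ≠ v) (h2 : y₂ ≠ v) (hy : ¬ AReach G v y₁ y₂)
    (k : ℕ) (hk : CopsWin G k) : HCopsWin G (k+1) := by
  classical
  obtain ⟨F, hF1, hF2⟩ := hk
  obtain ⟨b₁, hb1, hr1⟩ := exists_nbr_areach hG h1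
  obtain ⟨b₂, hb2, hr2⟩ := exists_nbr_areach hG h2
  have hbb : ¬ AReach G v b₁ b₂ := fun h => hy (hr1.trans (h.trans hr2.symm))
  set bl : V → V := fun x => if AReach G v x b₁ then b₂ else b₁ with hbl
  have hbladj : ∀ x, G.Adj v (bl x) := by
    intro x
    rw [hbl]
    by_cases hx : AReach G v x b₁
    · simpa [hx] using hb2
    · simpa [hx] using hb1
  have hblr : ∀ x, ¬ AReach G v x (bl x) := by
    intro x h
    by_cases hx : AReach G v x b₁
    · rw [hbl] at h
      simp only [if_pos hx] at h
      exact hbb (hx.symm.trans h)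
    · rw [hbl] at h
      simp only [if_neg hx] at h
      exact hx h
  let pw : ∀ i : Fin k, G.Walk v (F [] i) := fun i => (hG v (F [] i)).some
  set L : ℕ := (Finset.univ.sup fun i : Fin k => (pw i).length) + 1 with hLdef
  set W : Fin k → ℕ → V := fun i j => (pw i).getVert j with hW
  have hW0 : ∀ i, W i 0 = v := fun i => SimpleGraph.Walk.getVert_zero _
  have hWs : ∀ i j, CRStep G (W i j) (W i (j+1)) := by
    intro i j
    rcases Nat.lt_or_ge j (pw i).length with h | h
    · exact Or.inr ((pw i).adj_getVert_succ h)
    · left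
      rw [hW]
      simp only []
      rw [SimpleGraph.Walk.getVert_of_length_le _ h,
        SimpleGraph.Walk.getVert_of_length_le _ (by omega)]
  have hWL : ∀ i, W i L = F [] i := by
    intro i
    refine SimpleGraph.Walk.getVert_of_length_le _ ?_
    have h := Finset.le_sup (f := fun i : Fin k => (pw i).length) (Finset.mem_univ i)
    omega
  have hL : 1 ≤ L := by omega
  exact ⟨P v b₁ b₂ bl F W L, P_step hF1 hW0 hWs hWL hL hb1 hb2 hbladj,
    P_win hF1 hF2 hW0 hWs hWL hL hb1 hb2 hbladj hbb hblr⟩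

end HypAux

/-- If a finite connected graph `G` contains a cut vertex, then
`c_H(G) ≤ c(G) + 1`. -/
theorem hyperopicCopNumber_le_of_cutVertex {V : Type*} [Fintype V]
    (G : SimpleGraph V) (hG : G.Connected) (v : V)
    (hv : ¬ (G.induce ({v}ᶜ : Set V)).Connected) :
    hyperopicCopNumber G ≤ copNumber G + 1 := by
  classical
  have hne : Nonempty V := hG.nonempty
  have hcw : CopsWin G (copNumber G) := Nat.sInf_mem (⟨Fintype.card V, by
    exact HypAux.copsWin_card G⟩ : {k | CopsWin G k}.Nonempty)
  have hH : HCopsWin G (copNumber G + 1) := by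
    by_cases htriv : ∀ x : V, x = v
    · refine ⟨fun _ _ => v, fun l o i => HypAux.crstep_refl G v, ?_⟩
      intro r hr
      exact ⟨0, ⟨0, Nat.succ_pos _⟩, Or.inl (htriv (r 0)).symm⟩
    · push_neg at htriv
      obtain ⟨y, hy⟩ := htriv
      have hnp : ¬ (G.induce ({v}ᶜ : Set V)).Preconnected := by
        intro hpc
        exact hv ((SimpleGraph.connected_iff _).mpr ⟨hpc, ⟨⟨y, by simp [hy]⟩⟩⟩)
      have hex : ∃ a b : ({v}ᶜ : Set V), ¬ (G.induce ({v}ᶜ : Set V)).Reachable a b := by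
        by_contra hcc
        push_neg at hcc
        exact hnp fun a b => hcc a b
      obtain ⟨a, b, hab⟩ := hex
      have ha : (a : V) ≠ v := fun h => a.2 (by simp [h])
      have hb : (b : V) ≠ v := fun h => b.2 (by simp [h])
      have hsep : ¬ HypAux.AReach G v a b := by
        intro h
        obtain ⟨p, hp⟩ := h
        exact hab (HypAux.walk_to_induce p hp a.2 b.2)
      exact HypAux.hcopswin_of_sep G hG v a b ha hb hsep (copNumber G) hcw
  exact Nat.sInf_le hH
end

section
/- If a finite connected graph G is triangle-free, then c_H(G) ≤ c(G) + 1. -/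
-- auxiliary: tail position
open Classical in
noncomputable def tailAux {V : Type*} (f : List V → V) (w₀ : V) : List V → V
  | [] => w₀
  | x :: s => if f ((x :: s).reverse) = f s.reverse then tailAux f w₀ s else f s.reverse

open Classical in
noncomputable def tailF {V : Type*} (f : List V → V) (w₀ : V) (l : List V) : V := tailAux f w₀ l.reverse

lemma tailF_nil {V : Type*} (f : List V → V) (w₀ : V) : tailF f w₀ [] = w₀ := rfl

open Classical in
lemma tailF_snoc {V : Type*} (f : List V → V) (w₀ : V) (l : List V) (x : V) :
    tailF f w₀ (l ++ [x]) = if f (l ++ [x]) = f l then tailF f w₀ l else f l := by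
  unfold tailF
  rw [List.reverse_append]
  simp [tailAux, List.reverse_reverse]

lemma tailF_adj {V : Type*} (G : SimpleGraph V) (f : List V → V) (w₀ : V)
    (hmove : ∀ l x, CRStep G (f l) (f (l ++ [x])))
    (hw : G.Adj (f []) w₀) (l : List V) : G.Adj (f l) (tailF f w₀ l) := by
  induction l using List.reverseRecOn with
  | nil => simpa [tailF_nil] using hw
  | append_singleton l x ih =>
      rw [tailF_snoc]
      split_ifs with h
      · rwa [h]
      · rcases hmove l x with he | ha
        · exact absurd he.symm h
        · exact ha.symm

lemma tailF_step {V : Type*} (G : SimpleGraph V) (f : List V → V) (w₀ : V)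
    (hmove : ∀ l x, CRStep G (f l) (f (l ++ [x])))
    (hw : G.Adj (f []) w₀) (l : List V) (x : V) :
    CRStep G (tailF f w₀ l) (tailF f w₀ (l ++ [x])) := by
  rw [tailF_snoc]
  split_ifs with h
  · exact Or.inl rfl
  · exact Or.inr (tailF_adj G f w₀ hmove hw l).symm

lemma robberHist_succ {V : Type*} (r : ℕ → V) (n : ℕ) :
    robberHist r (n + 1) = robberHist r n ++ [r n] := by
  simp [robberHist, List.range_succ]

lemma hcopswin_succ {V : Type*} (G : SimpleGraph V) (hG : G.Connected)
    (htf : G.CliqueFree 3) (k : ℕ) (h : CopsWin G k) : HCopsWin G (k + 1) := by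
  classical
  obtain ⟨F, hFmove, hFwin⟩ := h
  rcases Nat.eq_zero_or_pos k with rfl | hk
  · obtain ⟨v⟩ := hG.nonempty
    obtain ⟨n, i, -⟩ := hFwin (fun _ => v) (fun _ => Or.inl rfl)
    exact i.elim0
  · set i0 : Fin k := ⟨0, hk⟩ with hi0
    set f : List V → V := fun l => F l i0 with hf
    have hfmove : ∀ l x, CRStep G (f l) (f (l ++ [x])) := fun l x => hFmove l x i0
    by_cases hedge : ∃ w, G.Adj (f []) w
    · obtain ⟨w₀, hw₀⟩ := hedge
      set p₀ := f [] with hp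
      set ext : List (Option V) → List V := fun l => l.map (fun o => o.getD p₀) with hextdef
      have hext : ∀ l o, ext (l ++ [o]) = ext l ++ [o.getD p₀] := by
        intro l o; simp [hextdef]
      set F' : List (Option V) → Fin (k+1) → V := fun l i =>
        if h : (i : ℕ) < k then F (ext l) ⟨i, h⟩ else tailF f w₀ (ext l) with hF'
      refine ⟨F', ?_, ?_⟩
      · intro l o i
        by_cases h : (i : ℕ) < k
        · simp only [hF', dif_pos h, hext]
          exact hFmove (ext l) (o.getD p₀) ⟨i, h⟩
        · simp only [hF', dif_neg h, hext]
          exact tailF_step G f w₀ hfmove hw₀ (ext l) (o.getD p₀)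
      · intro r hr
        have key : ∀ n, hObsList G F' r n = (robberHist r n).map some := by
          intro n
          induction n with
          | zero => rfl
          | succ n ih =>
            have hvis : ¬ ∀ i, G.Adj (F' (hObsList G F' r n) i) (r n) := by
              intro hC
              have h0 := hC ⟨0, Nat.lt_succ_of_lt hk⟩
              have hl := hC ⟨k, Nat.lt_succ_self k⟩
              rw [hF'] at h0 hl
              simp only at h0 hl
              rw [dif_pos hk] at h0
              rw [dif_neg (lt_irrefl k)] at hl
              have hab : G.Adj (f (ext (hObsList G F' r n)))
                  (tailF f w₀ (ext (hObsList G F' r n))) :=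
                tailF_adj G f w₀ hfmove hw₀ _
              have h0' : G.Adj (f (ext (hObsList G F' r n))) (r n) := h0
              exact htf {f (ext (hObsList G F' r n)), tailF f w₀ (ext (hObsList G F' r n)), r n}
                (SimpleGraph.is3Clique_triple_iff.mpr ⟨hab, h0', hl⟩)
            rw [hObsList, if_neg hvis, ih, robberHist_succ]
            simp
        have hexteq : ∀ n, ext (hObsList G F' r n) = robberHist r n := by
          intro n
          rw [key n, hextdef]
          simp [List.map_map, Function.comp_def]
        obtain ⟨n, i, hcap⟩ := hFwin r hr
        refine ⟨n, ⟨i, Nat.lt_succ_of_lt i.isLt⟩, ?_⟩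
        have e : ∀ m, F' (hObsList G F' r m) ⟨(i : ℕ), Nat.lt_succ_of_lt i.isLt⟩
            = F (robberHist r m) i := by
          intro m
          rw [hF']
          simp only
          rw [dif_pos i.isLt, hexteq m]
        rw [e n, e (n+1)]
        exact hcap
    · have hall : ∀ v, v = f [] := by
        intro v
        obtain ⟨w⟩ := hG.preconnected (f []) v
        cases w with
        | nil => rfl
        | cons h _ => exact absurd ⟨_, h⟩ hedge
      exact ⟨fun _ _ => f [], fun _ _ _ => Or.inl rfl,
        fun r hr => ⟨0, ⟨0, Nat.succ_pos k⟩, Or.inl (hall (r 0)).symm⟩⟩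

/-- If a finite connected graph `G` is triangle-free, then
`c_H(G) ≤ c(G) + 1`. -/
theorem hyperopicCopNumber_le_of_triangleFree {V : Type*} [Fintype V]
    (G : SimpleGraph V) (hG : G.Connected) (htf : G.CliqueFree 3) :
    hyperopicCopNumber G ≤ copNumber G + 1 := by
  classical
  have hcard : CopsWin G (Fintype.card V) :=
    ⟨fun _ i => (Fintype.equivFin V).symm i, fun _ _ _ => Or.inl rfl,
      fun r hr => ⟨0, Fintype.equivFin V (r 0), Or.inl (Equiv.symm_apply_apply _ _)⟩⟩
  have hmem : CopsWin G (copNumber G) := Nat.sInf_mem (s := {k | CopsWin G k}) ⟨_, hcard⟩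
  exact Nat.sInf_le (hcopswin_succ G hG htf _ hmem)
end

section
/- For every finite connected graph G on n vertices, c_H(G) ≤ ⌈n/2⌉. -/
private lemma exists_adj_dist {V : Type*} (G : SimpleGraph V) (hG : G.Connected)
    (u v : V) (h : v ≠ u) :
    ∃ w, G.Adj w v ∧ G.dist u w + 1 = G.dist u v := by
  obtain ⟨p, hp⟩ := hG.exists_walk_length_eq_dist v u
  cases p with
  | nil => exact absurd rfl h
  | @cons _ w _ hadj q =>
    refine ⟨w, hadj.symm, ?_⟩
    have h1 : G.dist u w ≤ q.length := by
      rw [SimpleGraph.dist_comm]; exact SimpleGraph.dist_le q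
    obtain ⟨q', hq'⟩ := hG.exists_walk_length_eq_dist u w
    have h2 : G.dist u v ≤ G.dist u w + 1 := by
      have := SimpleGraph.dist_le (q'.concat hadj.symm)
      rwa [SimpleGraph.Walk.length_concat, hq'] at this
    have h3 : q.length + 1 = G.dist u v := by
      have := hp
      rw [SimpleGraph.Walk.length_cons] at this
      rw [this, SimpleGraph.dist_comm]
    omega

private lemma exists_dominating {V : Type*} [Fintype V] (G : SimpleGraph V) (hG : G.Connected) :
    ∃ D : Finset V, D.card ≤ (Fintype.card V + 1) / 2 ∧
      ∀ v, v ∈ D ∨ ∃ w ∈ D, G.Adj w v := by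
  classical
  obtain ⟨u⟩ := hG.nonempty
  have hn : 1 ≤ Fintype.card V := Fintype.card_pos_iff.mpr hG.nonempty
  set A := Finset.univ.filter (fun v => Even (G.dist u v)) with hA
  set B := Finset.univ.filter (fun v => ¬ Even (G.dist u v)) with hB
  have hcard : A.card + B.card = Fintype.card V := by
    rw [hA, hB, Finset.card_filter_add_card_filter_not, Finset.card_univ]
  by_cases hAle : A.card ≤ (Fintype.card V + 1) / 2
  · refine ⟨A, hAle, fun v => ?_⟩
    by_cases hv : Even (G.dist u v)
    · left; exact Finset.mem_filter.mpr ⟨Finset.mem_univ _, hv⟩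
    · right
      have hvu : v ≠ u := fun e => hv (by simp [e, SimpleGraph.dist_self])
      obtain ⟨w, hw, hd⟩ := exists_adj_dist G hG u v hvu
      have hwe : Even (G.dist u w) := by
        rw [← hd, Nat.even_add_one] at hv
        exact not_not.mp hv
      exact ⟨w, Finset.mem_filter.mpr ⟨Finset.mem_univ _, hwe⟩, hw⟩
  · have hBle : B.card ≤ (Fintype.card V + 1) / 2 := by omega
    refine ⟨B, hBle, fun v => ?_⟩
    by_cases hv : Even (G.dist u v)
    · right
      by_cases hvu : v = u
      · -- find a neighbor of u
        have h2 : 1 < Fintype.card V := by omega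
        obtain ⟨x, hx⟩ := Fintype.exists_ne_of_one_lt_card h2 u
        obtain ⟨p, hp⟩ := hG.exists_walk_length_eq_dist u x
        cases p with
        | nil => exact absurd rfl hx
        | @cons _ w _ hadj q =>
          refine ⟨w, ?_, by rw [hvu]; exact hadj.symm⟩
          have hw1 : G.dist u w = 1 := by
            have hle : G.dist u w ≤ 1 := by
              have := SimpleGraph.dist_le hadj.toWalk
              simpa using this
            have hpos : 0 < G.dist u w := hG.pos_dist_of_ne (fun e => G.irrefl (e ▸ hadj))
            omega
          exact Finset.mem_filter.mpr ⟨Finset.mem_univ _, by rw [hw1]; decide⟩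
      · obtain ⟨w, hw, hd⟩ := exists_adj_dist G hG u v hvu
        have hwo : ¬ Even (G.dist u w) := by
          rw [← hd, Nat.even_add_one] at hv
          exact hv
        exact ⟨w, Finset.mem_filter.mpr ⟨Finset.mem_univ _, hwo⟩, hw⟩
    · left; exact Finset.mem_filter.mpr ⟨Finset.mem_univ _, hv⟩

/-- For every finite connected graph `G` on `n` vertices,
`c_H(G) ≤ ⌈n/2⌉`. -/
theorem hyperopicCopNumber_le_half {V : Type*} [Fintype V]
    (G : SimpleGraph V) (hG : G.Connected) :
    hyperopicCopNumber G ≤ (Fintype.card V + 1) / 2 := by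
  classical
  have hn : 1 ≤ Fintype.card V := Fintype.card_pos_iff.mpr hG.nonempty
  show sInf {k | HCopsWin G k} ≤ (Fintype.card V + 1) / 2
  apply Nat.sInf_le
  show HCopsWin G ((Fintype.card V + 1) / 2)
  set k := (Fintype.card V + 1) / 2 with hk
  have hkV : k ≤ Fintype.card V := by omega
  obtain ⟨D, hDcard, hDdom⟩ := exists_dominating G hG
  obtain ⟨D', hDD', -, hD'card⟩ :=
    Finset.exists_subsuperset_card_eq (Finset.subset_univ D) hDcard
      (by rw [Finset.card_univ]; exact hkV)
  have hcard0 : Fintype.card ↥D' = k := by rw [Fintype.card_coe]; exact hD'card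
  set eqv := Fintype.equivFinOfCardEq hcard0 with heqv
  set c0 : Fin k → V := fun i => ((eqv.symm i : D') : V) with hc0
  have hc0mem : ∀ i, c0 i ∈ D' := fun i => (eqv.symm i).2
  have hc0surj : ∀ d ∈ D', ∃ i, c0 i = d := fun d hd =>
    ⟨eqv ⟨d, hd⟩, by rw [hc0]; simp⟩
  set T0 := Finset.univ.filter (fun v => ∀ i, G.Adj (c0 i) v) with hT0
  have hT0adj : ∀ v ∈ T0, ∀ i, G.Adj (c0 i) v := fun v hv => (Finset.mem_filter.mp hv).2
  have hT0card : T0.card ≤ k := by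
    have h1 : T0 ⊆ Finset.univ \ D' := by
      intro v hv
      refine Finset.mem_sdiff.mpr ⟨Finset.mem_univ v, fun hvD' => ?_⟩
      obtain ⟨i, hi⟩ := hc0surj v hvD'
      exact G.irrefl (hi ▸ hT0adj v hv i)
    have h2 := Finset.card_le_card h1
    rw [Finset.card_sdiff_of_subset (Finset.subset_univ _), Finset.card_univ, hD'card] at h2
    omega
  set eqvT := Fintype.equivFinOfCardEq (Fintype.card_coe T0) with heqvT
  set e : Fin T0.card → V := fun j => ((eqvT.symm j : T0) : V) with he
  have hemem : ∀ j, e j ∈ T0 := fun j => (eqvT.symm j).2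
  have hesurj : ∀ t ∈ T0, ∃ j, e j = t := fun t ht =>
    ⟨eqvT ⟨t, ht⟩, by rw [he]; simp⟩
  set c1 : Fin k → V := fun i => if h : (i : ℕ) < T0.card then e ⟨i, h⟩ else c0 i with hc1
  set resp : V → Fin k → V := fun v i => if G.Adj (c0 i) v then v else c0 i with hresp
  set F : List (Option V) → Fin k → V := fun l => match l with
    | [] => c0
    | none :: _ => c1
    | some v :: _ => resp v
    with hF
  refine ⟨F, ?_, ?_⟩
  · intro l o i
    match l with
    | [] =>
      show CRStep G (c0 i) (F [o] i)
      match o with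
      | none =>
        show CRStep G (c0 i) (c1 i)
        simp only [hc1]
        by_cases h : (i : ℕ) < T0.card
        · rw [dif_pos h]
          exact Or.inr (hT0adj _ (hemem ⟨i, h⟩) i)
        · rw [dif_neg h]
          exact Or.inl rfl
      | some v =>
        show CRStep G (c0 i) (resp v i)
        simp only [hresp]
        by_cases h : G.Adj (c0 i) v
        · rw [if_pos h]; exact Or.inr h
        · rw [if_neg h]; exact Or.inl rfl
    | none :: l' => exact Or.inl rfl
    | some v :: l' => exact Or.inl rfl
  · intro r hr
    refine ⟨0, ?_⟩
    by_cases hvis : ∀ i, G.Adj (c0 i) (r 0)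
    · have hrT0 : r 0 ∈ T0 := Finset.mem_filter.mpr ⟨Finset.mem_univ _, hvis⟩
      obtain ⟨j, hj⟩ := hesurj (r 0) hrT0
      have hjk : (j : ℕ) < k := lt_of_lt_of_le j.isLt hT0card
      refine ⟨⟨j, hjk⟩, Or.inr ?_⟩
      have h1 : hObsList G F r 1 = [none] := by
        show hObsList G F r 0 ++
          [if ∀ i, G.Adj (F (hObsList G F r 0) i) (r 0) then none else some (r 0)] = [none]
        rw [if_pos (show ∀ i, G.Adj (F (hObsList G F r 0) i) (r 0) from hvis)]
        rfl
      rw [h1]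
      show c1 ⟨j, hjk⟩ = r 0
      simp only [hc1]
      rw [dif_pos (show ((⟨j, hjk⟩ : Fin k) : ℕ) < T0.card from j.isLt)]
      exact hj
    · by_cases hc : ∃ i, c0 i = r 0
      · obtain ⟨i, hi⟩ := hc
        exact ⟨i, Or.inl hi⟩
      · have hadj : ∃ i, G.Adj (c0 i) (r 0) := by
          rcases hDdom (r 0) with h | ⟨w, hw, hwadj⟩
          · obtain ⟨i, hi⟩ := hc0surj _ (hDD' h)
            exact absurd ⟨i, hi⟩ hc
          · obtain ⟨i, hi⟩ := hc0surj w (hDD' hw)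
            exact ⟨i, hi ▸ hwadj⟩
        obtain ⟨i, hi⟩ := hadj
        refine ⟨i, Or.inr ?_⟩
        have h1 : hObsList G F r 1 = [some (r 0)] := by
          show hObsList G F r 0 ++
            [if ∀ i, G.Adj (F (hObsList G F r 0) i) (r 0) then none else some (r 0)] = [some (r 0)]
          rw [if_neg (show ¬ ∀ i, G.Adj (F (hObsList G F r 0) i) (r 0) from hvis)]
          rfl
        rw [h1]
        show resp (r 0) i = r 0
        simp only [hresp]
        rw [if_pos hi]
end

section
/- For every n ≥ 1, the complete graph K_n satisfies c_H(K_n) = ⌈n/2⌉; in particular, the bound c_H(G) ≤ ⌈n/2⌉ for connected graphs on n vertices is tight. -/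
lemma crstep_top {n : ℕ} (u v : Fin n) : CRStep (⊤ : SimpleGraph (Fin n)) u v := by
  by_cases h : u = v
  · exact Or.inl h
  · exact Or.inr (by simpa using h)

lemma hcopswin_top (n : ℕ) (hn : 1 ≤ n) :
    HCopsWin (⊤ : SimpleGraph (Fin n)) ((n + 1) / 2) := by
  set k := (n + 1) / 2 with hkdef
  have hk1 : k ≤ n := by omega
  have hk2 : n ≤ 2 * k := by omega
  classical
  refine ⟨fun l i => if l = [] then ⟨i.1, lt_of_lt_of_le i.2 hk1⟩
      else ⟨(k + i.1) % n, Nat.mod_lt _ (by omega)⟩, fun l o i => crstep_top _ _, ?_⟩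
  intro r hr
  by_cases h : (r 0).1 < k
  · refine ⟨0, ⟨(r 0).1, h⟩, Or.inl ?_⟩
    simp only [hObsList]
    simp
  · push_neg at h
    have hlt : (r 0).1 < n := (r 0).2
    refine ⟨0, ⟨(r 0).1 - k, by omega⟩, Or.inr ?_⟩
    simp only [hObsList, List.nil_append]
    rw [if_neg (by simp)]
    have hv : (k + ((r 0).1 - k)) % n = (r 0).1 := by
      rw [Nat.add_sub_cancel' h]; exact Nat.mod_eq_of_lt hlt
    exact Fin.ext hv

lemma not_hcopswin_top (n k : ℕ) (hn : 1 ≤ n) (hk : k < (n + 1) / 2) :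
    ¬ HCopsWin (⊤ : SimpleGraph (Fin n)) k := by
  rintro ⟨F, hF, hwin⟩
  have h2k : 2 * k < n := by omega
  set S : ℕ → Finset (Fin n) := fun m =>
    (Finset.univ.image (fun i => F (List.replicate m none) i)) ∪
    (Finset.univ.image (fun i => F (List.replicate (m + 1) none) i)) with hS
  have hcard : ∀ m, (S m).card < n := by
    intro m
    calc (S m).card ≤ _ + _ := Finset.card_union_le _ _
      _ ≤ k + k := by
          gcongr <;> exact (Finset.card_image_le).trans (by simp)
      _ < n := by omega
  have hex : ∀ m, ∃ v : Fin n, v ∉ S m := by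
    intro m
    by_contra hc
    push_neg at hc
    have huniv : S m = Finset.univ := Finset.eq_univ_iff_forall.mpr hc
    have hc2 := hcard m
    rw [huniv] at hc2
    simp [Finset.card_univ] at hc2
  choose r hr using hex
  have hobs : ∀ m, hObsList (⊤ : SimpleGraph (Fin n)) F r m = List.replicate m none := by
    intro m
    induction m with
    | zero => simp only [hObsList]; rfl
    | succ m ih =>
      simp only [hObsList, ih]
      rw [if_pos, ← List.replicate_succ']
      intro i
      have hne : F (List.replicate m none) i ≠ r m := by
        intro hconx
        exact hr m (Finset.mem_union_left _
          (Finset.mem_image.mpr ⟨i, Finset.mem_univ _, hconx⟩))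
      simpa using hne
  obtain ⟨m, i, hcap⟩ := hwin r (fun _ => crstep_top _ _)
  rw [hobs m, hobs (m + 1)] at hcap
  rcases hcap with hcap | hcap
  · exact hr m (Finset.mem_union_left _
      (Finset.mem_image.mpr ⟨i, Finset.mem_univ _, hcap⟩))
  · exact hr m (Finset.mem_union_right _
      (Finset.mem_image.mpr ⟨i, Finset.mem_univ _, hcap⟩))

/-- For every `n ≥ 1`, the complete graph `K_n` satisfies
`c_H(K_n) = ⌈n/2⌉`; in particular the bound `c_H(G) ≤ ⌈n/2⌉` for connected graphs
on `n` vertices is tight. -/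
theorem hyperopicCopNumber_completeGraph (n : ℕ) (hn : 1 ≤ n) :
    hyperopicCopNumber (⊤ : SimpleGraph (Fin n)) = (n + 1) / 2 := by
  have hmem : HCopsWin (⊤ : SimpleGraph (Fin n)) ((n + 1) / 2) := hcopswin_top n hn
  refine le_antisymm (Nat.sInf_le hmem) ?_
  refine le_csInf ⟨_, hmem⟩ ?_
  intro b hb
  by_contra hlt
  push_neg at hlt
  exact not_hcopswin_top n b hn hlt hb
end

section
/- For all n ≥ 3, c_H(K_n − e) = ⌊n/2⌋, where K_n − e denotes the complete graph on n vertices with one edge removed. -/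
private abbrev Gd {n : ℕ} (u v : Fin n) : SimpleGraph (Fin n) :=
  (⊤ : SimpleGraph (Fin n)).deleteEdges {s(u, v)}

lemma gd_adj {n : ℕ} (u v x y : Fin n) :
    (Gd u v).Adj x y ↔ x ≠ y ∧ ¬(x = u ∧ y = v) ∧ ¬(x = v ∧ y = u) := by
  simp [SimpleGraph.deleteEdges_adj, Sym2.eq_iff]

lemma crstep_of_right {n : ℕ} (u v x y : Fin n) (h1 : y ≠ u) (h2 : y ≠ v) :
    CRStep (Gd u v) x y := by
  rcases eq_or_ne x y with h | h
  · exact Or.inl h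
  · exact Or.inr ((gd_adj u v x y).2 ⟨h, fun ⟨_, h⟩ => h2 h, fun ⟨_, h⟩ => h1 h⟩)

lemma crstep_of_left {n : ℕ} (u v x y : Fin n) (h1 : x ≠ u) (h2 : x ≠ v) :
    CRStep (Gd u v) x y := by
  rcases eq_or_ne x y with h | h
  · exact Or.inl h
  · exact Or.inr ((gd_adj u v x y).2 ⟨h, fun ⟨h, _⟩ => h1 h, fun ⟨h, _⟩ => h2 h⟩)

/-- The cop strategy skeleton: positions depend only on the shape of the observation list. -/
def copF {α β : Type*} (c0 c1 c1' c2' : β) : List (Option α) → β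
  | [] => c0
  | (none :: _) => c1
  | (some _ :: []) => c1'
  | (some _ :: _ :: _) => c2'

lemma exists_sigma {n : ℕ} (hn : 3 ≤ n) (u v : Fin n) (huv : u ≠ v) :
    ∃ σ : Fin n ≃ Fin n, σ ⟨0, by omega⟩ = u ∧ σ ⟨1, by omega⟩ = v := by
  set z0 : Fin n := ⟨0, by omega⟩
  set z1 : Fin n := ⟨1, by omega⟩
  have hz : z0 ≠ z1 := by simp [z0, z1, Fin.ext_iff]
  set e1 := Equiv.swap z0 u with he1
  set w := e1 v with hw
  have hwz : w ≠ z0 := by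
    intro h
    have : e1 w = e1 z0 := by rw [h]
    rw [hw, Equiv.swap_apply_self, Equiv.swap_apply_left] at this
    exact huv this.symm
  refine ⟨(Equiv.swap z1 w).trans e1, ?_, ?_⟩
  · simp only [Equiv.trans_apply]
    rw [Equiv.swap_apply_of_ne_of_ne hz (Ne.symm hwz), he1, Equiv.swap_apply_left]
  · simp only [Equiv.trans_apply]
    rw [Equiv.swap_apply_left, hw, Equiv.swap_apply_self]

lemma upper_bound {n : ℕ} (hn : 3 ≤ n) (u v : Fin n) (huv : u ≠ v) :
    HCopsWin (Gd u v) (n / 2) := by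
  obtain ⟨σ, hσ0, hσ1⟩ := exists_sigma hn u v huv
  set k := n / 2 with hk
  have hk1 : 1 ≤ k := by omega
  have hkn : k + 2 ≤ n := by omega
  have h2k : n ≤ 2 * k + 1 := by omega
  set idx : ℕ → Fin n := fun m => ⟨m % n, Nat.mod_lt _ (by omega)⟩ with hidx
  have idx_eq : ∀ m : ℕ, m < n → (idx m).val = m := fun m hm => Nat.mod_eq_of_lt hm
  have heq : ∀ (x : Fin n) (a : ℕ), a < n → (σ.symm x).val = a → σ (idx a) = x := by
    intro x a ha hax
    have : idx a = σ.symm x := Fin.ext (by rw [idx_eq a ha, hax])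
    rw [this, Equiv.apply_symm_apply]
  have hu : σ (idx 0) = u := by
    rw [← hσ0]; exact congrArg σ (Fin.ext (idx_eq 0 (by omega)))
  have hv : σ (idx 1) = v := by
    rw [← hσ1]; exact congrArg σ (Fin.ext (idx_eq 1 (by omega)))
  have hne : ∀ a b : ℕ, a < n → b < n → a ≠ b → σ (idx a) ≠ σ (idx b) := by
    intro a b ha hb hab h
    have := σ.injective h
    rw [Fin.ext_iff, idx_eq a ha, idx_eq b hb] at this
    exact hab this
  set C0 : Fin k → Fin n := fun i => σ (idx (if i.val = 0 then 0 else i.val + 1)) with hC0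
  set C1 : Fin k → Fin n := fun i => σ (idx (min (k + 1 + i.val) (n - 1))) with hC1
  set C1' : Fin k → Fin n := fun i => σ (idx (i.val + 2)) with hC1'
  set C2' : Fin k → Fin n :=
    fun i => σ (idx (if i.val = 0 then 1 else min (k + 1 + i.val) (n - 1))) with hC2'
  set F := copF (α := Fin n) C0 C1 C1' C2' with hF
  have hC1u : ∀ i, C1 i ≠ u := by
    intro i; rw [hC1, ← hu]
    exact hne _ _ (by omega) (by omega) (by omega)
  have hC1v : ∀ i, C1 i ≠ v := by
    intro i; rw [hC1, ← hv]
    exact hne _ _ (by omega) (by omega) (by omega)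
  have hC1'u : ∀ i, C1' i ≠ u := by
    intro i; rw [hC1', ← hu]
    exact hne _ _ (by have := i.isLt; omega) (by omega) (by omega)
  have hC1'v : ∀ i, C1' i ≠ v := by
    intro i; rw [hC1', ← hv]
    exact hne _ _ (by have := i.isLt; omega) (by omega) (by omega)
  refine ⟨F, ?_, ?_⟩
  · -- legality
    rintro (_ | ⟨(_ | x), l⟩) o i
    · rcases o with _ | x
      · exact crstep_of_right u v _ _ (hC1u i) (hC1v i)
      · exact crstep_of_right u v _ _ (hC1'u i) (hC1'v i)
    · exact Or.inl rfl
    · rcases l with _ | ⟨o', l⟩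
      · exact crstep_of_left u v _ _ (hC1'u i) (hC1'v i)
      · exact Or.inl rfl
  · -- winning
    intro r hr
    have h0 : hObsList (Gd u v) F r 0 = [] := rfl
    by_cases hvis : ∀ i, (Gd u v).Adj (F (hObsList (Gd u v) F r 0) i) (r 0)
    · -- invisible robber is caught by C1
      have h1 : hObsList (Gd u v) F r 1 = [none] := by
        show hObsList (Gd u v) F r 0 ++ [_] = [none]
        rw [if_pos hvis, h0]; rfl
      set t := σ.symm (r 0) with ht
      have hadj : ∀ i, (Gd u v).Adj (C0 i) (r 0) := by
        intro i; have := hvis i; rwa [h0] at this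
      have e0 : C0 ⟨0, hk1⟩ = u := by rw [hC0]; simpa using hu
      have h_u : r 0 ≠ u ∧ r 0 ≠ v := by
        have h := (gd_adj u v _ _).1 (hadj ⟨0, hk1⟩)
        rw [e0] at h
        exact ⟨fun hh => h.1 hh.symm, fun hh => h.2.1 ⟨rfl, hh⟩⟩
      have htv : t.val ≠ 0 ∧ t.val ≠ 1 := by
        constructor <;> intro h
        · exact h_u.1 ((heq (r 0) 0 (by omega) h).symm.trans hu)
        · exact h_u.2 ((heq (r 0) 1 (by omega) h).symm.trans hv)
      have htk : k + 1 ≤ t.val := by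
        by_contra hcon
        push_neg at hcon
        have h2t : 2 ≤ t.val := by omega
        have hik : t.val - 1 < k := by omega
        have h := (gd_adj u v _ _).1 (hadj ⟨t.val - 1, hik⟩)
        apply h.1
        rw [hC0]
        show σ (idx (if t.val - 1 = 0 then 0 else t.val - 1 + 1)) = r 0
        rw [if_neg (by omega)]
        have harith : t.val - 1 + 1 = t.val := by omega
        rw [harith]
        exact heq (r 0) _ t.isLt rfl
      refine ⟨0, ⟨t.val - (k + 1), by have := t.isLt; omega⟩, Or.inr ?_⟩
      rw [h1]
      show C1 _ = r 0
      rw [hC1]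
      show σ (idx (min (k + 1 + (t.val - (k + 1))) (n - 1))) = r 0
      have hmin : min (k + 1 + (t.val - (k + 1))) (n - 1) = t.val := by
        have := t.isLt; omega
      rw [hmin]
      exact heq (r 0) _ t.isLt rfl
    · -- visible: robber is at v (or already caught)
      have hobs : hObsList (Gd u v) F r 1 = [some (r 0)] := by
        show hObsList (Gd u v) F r 0 ++ [_] = _
        rw [if_neg hvis, h0]; rfl
      push_neg at hvis
      obtain ⟨i0, hni⟩ := hvis
      rw [h0] at hni
      rcases eq_or_ne (C0 i0) (r 0) with hcap | hnecap
      · exact ⟨0, i0, Or.inl (by rw [h0]; exact hcap)⟩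
      · have hC0v : C0 i0 ≠ v := by
          rw [hC0, ← hv]
          refine hne _ _ ?_ (by omega) ?_ <;> have := i0.isLt
          · split <;> omega
          · split <;> omega
        have hr0v : r 0 = v := by
          rw [gd_adj] at hni
          tauto
        have hr1u : r 1 ≠ u := by
          rcases hr 0 with h | h
          · rw [← h, hr0v]; exact Ne.symm huv
          · rw [gd_adj] at h
            intro hh
            exact h.2.2 ⟨hr0v, hh⟩
        set t1 := σ.symm (r 1) with ht1
        have ht10 : t1.val ≠ 0 := by
          intro h
          exact hr1u (by rw [← hu, heq (r 1) 0 (by omega) h])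
        by_cases hcase : 2 ≤ t1.val ∧ t1.val ≤ k + 1
        · refine ⟨1, ⟨t1.val - 2, by omega⟩, Or.inl ?_⟩
          rw [hobs]
          show C1' _ = r 1
          rw [hC1']
          show σ (idx (t1.val - 2 + 2)) = r 1
          have harith : t1.val - 2 + 2 = t1.val := by omega
          rw [harith]
          exact heq (r 1) _ t1.isLt rfl
        · have hF2 : F (hObsList (Gd u v) F r 2) = C2' := by
            show F (hObsList (Gd u v) F r 1 ++ [_]) = C2'
            rw [hobs]
            rfl
          rcases Nat.lt_or_ge t1.val 2 with hsml | hbig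
          · -- t1.val = 1
            have ht11 : t1.val = 1 := by omega
            refine ⟨1, ⟨0, hk1⟩, Or.inr ?_⟩
            rw [hF2, hC2']
            show σ (idx (if (0 : ℕ) = 0 then 1 else min (k + 1 + 0) (n - 1))) = r 1
            rw [if_pos rfl]
            exact heq (r 1) 1 (by omega) ht11
          · -- k + 2 ≤ t1.val
            have hbg : k + 2 ≤ t1.val := by omega
            refine ⟨1, ⟨t1.val - (k + 1), by have := t1.isLt; omega⟩, Or.inr ?_⟩
            rw [hF2, hC2']
            show σ (idx (if t1.val - (k + 1) = 0 then 1
              else min (k + 1 + (t1.val - (k + 1))) (n - 1))) = r 1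
            rw [if_neg (by omega)]
            have hmin : min (k + 1 + (t1.val - (k + 1))) (n - 1) = t1.val := by
              have := t1.isLt; omega
            rw [hmin]
            exact heq (r 1) _ t1.isLt rfl

lemma lower_bound {n : ℕ} (u v : Fin n) (huv : u ≠ v) {j : ℕ} (hj : 2 * j + 1 < n) :
    ¬ HCopsWin (Gd u v) j := by
  classical
  rintro ⟨F, -, hwin⟩
  set Cs : ℕ → Fin j → Fin n := fun m => F (List.replicate m none) with hCs
  -- at every step the robber can find a safe vertex
  have hex : ∀ (prev : Option (Fin n)) (m : ℕ), ∃ x : Fin n,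
      (∀ i, Cs m i ≠ x) ∧ (∀ i, Cs (m + 1) i ≠ x) ∧
      (x = v → ∀ i, Cs m i ≠ u) ∧ (x = u → ∀ i, Cs m i ≠ v) ∧
      (∀ p, prev = some p → (p = u → x ≠ v) ∧ (p = v → x ≠ u)) := by
    intro prev m
    set D : Finset (Fin n) :=
      (Finset.univ.image (Cs m)) ∪ (Finset.univ.image (Cs (m + 1))) with hD
    set exclV : Prop := u ∈ Finset.univ.image (Cs m) ∨ prev = some u with hexclV
    set extra : Fin n := if exclV ∧ v ∉ D then v else u with hextra
    set B : Finset (Fin n) := insert extra D with hB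
    have hcard : B.card < n := by
      have h1 : B.card ≤ D.card + 1 := Finset.card_insert_le _ _
      have h2 : D.card ≤ (Finset.univ.image (Cs m)).card +
          (Finset.univ.image (Cs (m + 1))).card := Finset.card_union_le _ _
      have h3 : (Finset.univ.image (Cs m)).card ≤ j := by
        refine le_trans (Finset.card_image_le) ?_
        simp
      have h4 : (Finset.univ.image (Cs (m + 1))).card ≤ j := by
        refine le_trans (Finset.card_image_le) ?_
        simp
      omega
    have hxall : ∃ x, x ∉ B := by
      by_contra h
      push_neg at h
      have hBu : B = Finset.univ := Finset.eq_univ_iff_forall.mpr h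
      rw [hBu, Finset.card_univ, Fintype.card_fin] at hcard
      omega
    obtain ⟨x, hx⟩ := hxall
    have hxD : x ∉ D := fun h => hx (Finset.mem_insert_of_mem h)
    have hxe : x ≠ extra := fun h => hx (h ▸ Finset.mem_insert_self _ _)
    have memD1 : ∀ i, Cs m i ∈ D := by
      intro i
      exact Finset.mem_union_left _ (Finset.mem_image.mpr ⟨i, Finset.mem_univ _, rfl⟩)
    have memD2 : ∀ i, Cs (m + 1) i ∈ D := by
      intro i
      exact Finset.mem_union_right _ (Finset.mem_image.mpr ⟨i, Finset.mem_univ _, rfl⟩)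
    refine ⟨x, fun i h => hxD (h ▸ memD1 i), fun i h => hxD (h ▸ memD2 i), ?_, ?_, ?_⟩
    · intro hxv i hiu
      have hE : exclV := Or.inl (hiu ▸ Finset.mem_image.mpr ⟨i, Finset.mem_univ _, rfl⟩)
      have hvD : v ∉ D := hxv ▸ hxD
      exact hxe (hxv.trans (if_pos ⟨hE, hvD⟩).symm)
    · intro hxu i hiv
      by_cases hc : exclV ∧ v ∉ D
      · exact hc.2 (hiv ▸ memD1 i)
      · exact hxe (hxu.trans (if_neg hc).symm)
    · rintro p rfl
      constructor
      · intro hpu hxv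
        have hE : exclV := Or.inr (by rw [hpu])
        have hvD : v ∉ D := hxv ▸ hxD
        exact hxe (hxv.trans (if_pos ⟨hE, hvD⟩).symm)
      · intro hpv hxu
        by_cases hc : exclV ∧ v ∉ D
        · rcases hc.1 with h | h
          · exact (hxu ▸ hxD) (Finset.mem_union_left _ h)
          · rw [hpv] at h
            exact huv (Option.some_injective _ h).symm
        · exact hxe (hxu.trans (if_neg hc).symm)
  -- the escaping robber trajectory
  set r : ℕ → Fin n := fun m =>
    Nat.rec (Classical.choose (hex none 0))
      (fun m' prev => Classical.choose (hex (some prev) (m' + 1))) m with hr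
  have hG0 := Classical.choose_spec (hex none 0)
  have hGs : ∀ m, _ := fun m => Classical.choose_spec (hex (some (r m)) (m + 1))
  have hGm : ∀ m, (∀ i, Cs m i ≠ r m) ∧ (∀ i, Cs (m + 1) i ≠ r m) ∧
      (r m = v → ∀ i, Cs m i ≠ u) ∧ (r m = u → ∀ i, Cs m i ≠ v) := by
    intro m
    cases m with
    | zero => exact ⟨hG0.1, hG0.2.1, hG0.2.2.1, hG0.2.2.2.1⟩
    | succ m' => exact ⟨(hGs m').1, (hGs m').2.1, (hGs m').2.2.1, (hGs m').2.2.2.1⟩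
  have hmove : ∀ m, (r m = u → r (m + 1) ≠ v) ∧ (r m = v → r (m + 1) ≠ u) := by
    intro m
    exact (hGs m).2.2.2.2 (r m) rfl
  have hlegal : ∀ m, CRStep (Gd u v) (r m) (r (m + 1)) := by
    intro m
    rcases eq_or_ne (r m) (r (m + 1)) with h | h
    · exact Or.inl h
    · refine Or.inr ((gd_adj u v _ _).2 ⟨h, ?_, ?_⟩)
      · rintro ⟨h1, h2⟩; exact (hmove m).1 h1 h2
      · rintro ⟨h1, h2⟩; exact (hmove m).2 h1 h2
  have hinv : ∀ m, hObsList (Gd u v) F r m = List.replicate m none := by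
    intro m
    induction m with
    | zero => rfl
    | succ m ih =>
      show hObsList (Gd u v) F r m ++ [_] = _
      rw [ih]
      have hcond : ∀ i, (Gd u v).Adj (F (List.replicate m none) i) (r m) := by
        intro i
        refine (gd_adj u v _ _).2 ⟨(hGm m).1 i, ?_, ?_⟩
        · rintro ⟨h1, h2⟩; exact (hGm m).2.2.1 h2 i h1
        · rintro ⟨h1, h2⟩; exact (hGm m).2.2.2 h2 i h1
      rw [if_pos hcond, List.replicate_succ']
  obtain ⟨m, i, hcap⟩ := hwin r hlegal
  rw [hinv m, hinv (m + 1)] at hcap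
  rcases hcap with h | h
  · exact (hGm m).1 i h
  · exact (hGm m).2.1 i h

/-- For all `n ≥ 3`, `c_H(K_n − e) = ⌊n/2⌋`, where `K_n − e` is the
complete graph on `n` vertices with one edge removed. -/
theorem hyperopicCopNumber_completeGraph_deleteEdge (n : ℕ) (hn : 3 ≤ n)
    (u v : Fin n) (huv : u ≠ v) :
    hyperopicCopNumber ((⊤ : SimpleGraph (Fin n)).deleteEdges {s(u, v)}) = n / 2 := by
  have hupper := upper_bound hn u v huv
  apply le_antisymm
  · exact Nat.sInf_le hupper
  · refine le_csInf ⟨_, hupper⟩ ?_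
    intro j hj
    by_contra hcon
    push_neg at hcon
    exact lower_bound u v huv (by omega) hj
end

section
/- For all n ≥ 5 and for any two distinct edges removed from the complete graph K_n, the resulting graph K_n − 2e satisfies c_H(K_n − 2e) ≤ ⌈n/2⌉ − 1. -/
/-- The graph `K_n` minus the two edges `e₁ e₂`. -/
private abbrev Gdel {n : ℕ} (e₁ e₂ : Sym2 (Fin n)) : SimpleGraph (Fin n) :=
  (⊤ : SimpleGraph (Fin n)).deleteEdges {e₁, e₂}

private lemma gdel_adj {n : ℕ} (e₁ e₂ : Sym2 (Fin n)) (u v : Fin n) :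
    (Gdel e₁ e₂).Adj u v ↔ u ≠ v ∧ s(u, v) ≠ e₁ ∧ s(u, v) ≠ e₂ := by
  simp [Gdel, SimpleGraph.deleteEdges_adj, Set.mem_insert_iff, not_or]

/-- Data for the two-move hyperopic cop strategy. -/
private def Setup {n : ℕ} (e₁ e₂ : Sym2 (Fin n)) (p₁ p₂ x₁ x₂ : Fin n) : Prop :=
  p₁ ≠ p₂ ∧ x₁ ≠ x₂ ∧ p₁ ≠ x₁ ∧ p₁ ≠ x₂ ∧ p₂ ≠ x₁ ∧ p₂ ≠ x₂ ∧
  (x₁ ∈ e₁ ∨ x₂ ∈ e₁) ∧ (x₁ ∈ e₂ ∨ x₂ ∈ e₂) ∧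
  (∀ x, x = x₁ ∨ x = x₂ → ∃ p, (p = p₁ ∨ p = p₂) ∧ (Gdel e₁ e₂).Adj p x) ∧
  (∀ x, x = x₁ ∨ x = x₂ → ∃ p, (p = p₁ ∨ p = p₂) ∧ ¬ (Gdel e₁ e₂).Adj p x)

private lemma setup_shared {n : ℕ} (hn : 5 ≤ n) (a b c : Fin n)
    (hab : a ≠ b) (hac : a ≠ c) (hbc : b ≠ c) :
    ∃ p₁ p₂ x₁ x₂ : Fin n, Setup s(a, b) s(a, c) p₁ p₂ x₁ x₂ := by
  have hcard : (({a, b, c} : Finset (Fin n)))ᶜ.Nonempty := by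
    rw [← Finset.card_pos, Finset.card_compl]
    have h3 : ({a, b, c} : Finset (Fin n)).card ≤ 3 := by
      apply le_trans (Finset.card_insert_le _ _)
      have := Finset.card_insert_le b ({c} : Finset (Fin n))
      simp at this ⊢; omega
    simp only [Fintype.card_fin]; omega
  obtain ⟨q, hq⟩ := hcard
  simp only [Finset.mem_compl, Finset.mem_insert, Finset.mem_singleton, not_or] at hq
  obtain ⟨hqa, hqb, hqc⟩ := hq
  refine ⟨a, q, b, c, fun h => hqa h.symm, hbc, hab, hac, fun h => hqb h, fun h => hqc h, ?_, ?_, ?_, ?_⟩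
  · left; exact Sym2.mem_mk_right a b
  · right; exact Sym2.mem_mk_right a c
  · rintro x (rfl | rfl)
    · exact ⟨q, Or.inr rfl, (gdel_adj _ _ _ _).2 ⟨fun h => hqb h, by
        simp [Sym2.eq_iff]; tauto, by simp [Sym2.eq_iff]; tauto⟩⟩
    · exact ⟨q, Or.inr rfl, (gdel_adj _ _ _ _).2 ⟨fun h => hqc h, by
        simp [Sym2.eq_iff]; tauto, by simp [Sym2.eq_iff]; tauto⟩⟩
  · rintro x (rfl | rfl)
    · exact ⟨a, Or.inl rfl, fun h => (((gdel_adj _ _ _ _).1 h).2.1) rfl⟩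
    · exact ⟨a, Or.inl rfl, fun h => (((gdel_adj _ _ _ _).1 h).2.2) rfl⟩

private lemma setup_disjoint {n : ℕ} (a b c d : Fin n)
    (hab : a ≠ b) (hcd : c ≠ d) (hac : a ≠ c) (had : a ≠ d) (hbc : b ≠ c) (hbd : b ≠ d) :
    ∃ p₁ p₂ x₁ x₂ : Fin n, Setup s(a, b) s(c, d) p₁ p₂ x₁ x₂ := by
  refine ⟨a, c, b, d, hac, hbd, hab, had, hbc.symm, hcd, ?_, ?_, ?_, ?_⟩
  · left; exact Sym2.mem_mk_right a b
  · right; exact Sym2.mem_mk_right c d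
  · rintro x (rfl | rfl)
    · exact ⟨c, Or.inr rfl, (gdel_adj _ _ _ _).2 ⟨hbc.symm, by
        simp [Sym2.eq_iff]; tauto, by simp [Sym2.eq_iff]; tauto⟩⟩
    · exact ⟨a, Or.inl rfl, (gdel_adj _ _ _ _).2 ⟨had, by
        simp [Sym2.eq_iff]; tauto, by simp [Sym2.eq_iff]; tauto⟩⟩
  · rintro x (rfl | rfl)
    · exact ⟨a, Or.inl rfl, fun h => (((gdel_adj _ _ _ _).1 h).2.1) rfl⟩
    · exact ⟨c, Or.inr rfl, fun h => (((gdel_adj _ _ _ _).1 h).2.2) rfl⟩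

private lemma exists_setup {n : ℕ} (hn : 5 ≤ n) (e₁ e₂ : Sym2 (Fin n))
    (h₁ : ¬ e₁.IsDiag) (h₂ : ¬ e₂.IsDiag) (hne : e₁ ≠ e₂) :
    ∃ p₁ p₂ x₁ x₂ : Fin n, Setup e₁ e₂ p₁ p₂ x₁ x₂ := by
  induction e₁ using Sym2.ind with | _ a b =>
  induction e₂ using Sym2.ind with | _ c d =>
  rw [Sym2.mk_isDiag_iff] at h₁ h₂
  by_cases h3 : a = c
  · subst h3
    have hbd : b ≠ d := fun h => hne (by rw [h])
    exact setup_shared hn a b d h₁ h₂ hbd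
  by_cases h4 : a = d
  · subst h4
    rw [show s(c, a) = s(a, c) from Sym2.eq_swap]
    have hbc : b ≠ c := fun h => hne (by rw [h, Sym2.eq_swap])
    exact setup_shared hn a b c h₁ (Ne.symm h₂) hbc
  by_cases h5 : b = c
  · subst h5
    rw [show s(a, b) = s(b, a) from Sym2.eq_swap]
    have had : a ≠ d := fun h => hne (by rw [h, Sym2.eq_swap])
    exact setup_shared hn b a d (Ne.symm h₁) h₂ had
  by_cases h6 : b = d
  · subst h6
    rw [show s(a, b) = s(b, a) from Sym2.eq_swap, show s(c, b) = s(b, c) from Sym2.eq_swap]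
    have hac : a ≠ c := fun h => hne (by rw [h, Sym2.eq_swap, ← Sym2.eq_swap])
    exact setup_shared hn b a c (Ne.symm h₁) (Ne.symm h₂) hac
  · exact setup_disjoint a b c d h₁ h₂ h3 h4 h5 h6


private theorem hcopswin_of_plan {V : Type*} (G : SimpleGraph V) (k : ℕ)
    (s t : Fin k → V)
    (hA : ∀ i, CRStep G (s i) (t i))
    (hB : ∀ v, (∀ i, G.Adj (s i) v) → ∃ i, t i = v)
    (hC : ∀ v, ∃ i, s i = v ∨ G.Adj (s i) v) :
    HCopsWin G k := by
  classical
  refine ⟨fun l i =>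
    match l with
    | [] => s i
    | none :: _ => t i
    | some v :: _ => if s i = v ∨ G.Adj (s i) v then v else s i, ?_, ?_⟩
  · intro l o i
    cases l with
    | nil =>
      cases o with
      | none => exact hA i
      | some v =>
        show CRStep G (s i) (if s i = v ∨ G.Adj (s i) v then v else s i)
        by_cases h : s i = v ∨ G.Adj (s i) v
        · rw [if_pos h]; exact h
        · rw [if_neg h]; exact Or.inl rfl
    | cons x l' =>
      cases x <;> exact Or.inl rfl
  · intro r hr
    set F : List (Option V) → Fin k → V := fun l i =>
      match l with
      | [] => s i
      | none :: _ => t i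
      | some v :: _ => if s i = v ∨ G.Adj (s i) v then v else s i with hF
    by_cases h : ∀ i, G.Adj (F [] i) (r 0)
    · obtain ⟨i, hi⟩ := hB (r 0) (fun i => h i)
      refine ⟨0, i, Or.inr ?_⟩
      simp only [hObsList, List.nil_append]
      erw [if_pos h]
      exact hi
    · obtain ⟨i, hi⟩ := hC (r 0)
      refine ⟨0, i, Or.inr ?_⟩
      simp only [hObsList, List.nil_append]
      erw [if_neg h]
      show (if s i = r 0 ∨ G.Adj (s i) (r 0) then r 0 else s i) = r 0
      rw [if_pos hi]


/-- For all `n ≥ 5` and any two distinct edges removed from the complete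
graph `K_n`, the resulting graph `K_n − 2e` satisfies `c_H(K_n − 2e) ≤ ⌈n/2⌉ − 1`. -/
theorem hyperopicCopNumber_completeGraph_deleteTwoEdges (n : ℕ) (hn : 5 ≤ n)
    (e₁ e₂ : Sym2 (Fin n)) (h₁ : ¬ e₁.IsDiag) (h₂ : ¬ e₂.IsDiag) (hne : e₁ ≠ e₂) :
    hyperopicCopNumber ((⊤ : SimpleGraph (Fin n)).deleteEdges {e₁, e₂}) ≤
      (n + 1) / 2 - 1 := by
  classical
  obtain ⟨p₁, p₂, x₁, x₂, hp, hx, h11, h12, h21, h22, hE₁, hE₂, hP4, hP3⟩ :=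
    exists_setup hn e₁ e₂ h₁ h₂ hne
  set G := Gdel e₁ e₂ with hG
  set k : ℕ := (n + 1) / 2 - 1 with hk
  have hk2 : 2 ≤ k := by omega
  have hkn : k ≤ n - 2 := by omega
  -- the excluded pair
  set X : Finset (Fin n) := {x₁, x₂} with hX
  have hXcard : X.card = 2 := by
    rw [hX, Finset.card_insert_of_notMem (by simp [hx]), Finset.card_singleton]
  have hsub : ({p₁, p₂} : Finset (Fin n)) ⊆ Xᶜ := by
    intro z hz
    simp only [Finset.mem_insert, Finset.mem_singleton] at hz
    simp only [Finset.mem_compl, hX, Finset.mem_insert, Finset.mem_singleton, not_or]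
    rcases hz with rfl | rfl
    · exact ⟨h11, h12⟩
    · exact ⟨h21, h22⟩
  have hXc_card : (Xᶜ : Finset (Fin n)).card = n - 2 := by
    rw [Finset.card_compl, hXcard, Fintype.card_fin]
  have hpp : ({p₁, p₂} : Finset (Fin n)).card ≤ k := by
    apply le_trans (Finset.card_insert_le _ _)
    simp; omega
  obtain ⟨S, hPS, hSX, hScard⟩ :=
    Finset.exists_subsuperset_card_eq hsub hpp (by omega)
  -- initial cop positions
  set sf : Fin k → Fin n := fun i => (S.orderIsoOfFin hScard i : Fin n) with hsf
  have hsf_mem : ∀ i, sf i ∈ S := fun i => (S.orderIsoOfFin hScard i).2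
  have hsf_surj : ∀ v ∈ S, ∃ i, sf i = v := by
    intro v hv
    refine ⟨(S.orderIsoOfFin hScard).symm ⟨v, hv⟩, ?_⟩
    rw [hsf]
    exact congrArg Subtype.val ((S.orderIsoOfFin hScard).apply_symm_apply ⟨v, hv⟩)
  have hS_not_X : ∀ v ∈ S, v ∉ X := fun v hv => Finset.mem_compl.1 (hSX hv)
  -- each deleted edge has an endpoint in X, so vertices outside X are mutually adjacent
  have adj_of : ∀ u v : Fin n, u ∉ X → v ∉ X → u ≠ v → G.Adj u v := by
    intro u v hu hv huv
    rw [hG, gdel_adj]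
    refine ⟨huv, ?_, ?_⟩
    · intro h
      rcases hE₁ with hm | hm
      · rw [← h, Sym2.mem_iff] at hm
        rcases hm with rfl | rfl
        · exact hu (by simp [hX])
        · exact hv (by simp [hX])
      · rw [← h, Sym2.mem_iff] at hm
        rcases hm with rfl | rfl
        · exact hu (by simp [hX])
        · exact hv (by simp [hX])
    · intro h
      rcases hE₂ with hm | hm
      · rw [← h, Sym2.mem_iff] at hm
        rcases hm with rfl | rfl
        · exact hu (by simp [hX])
        · exact hv (by simp [hX])
      · rw [← h, Sym2.mem_iff] at hm
        rcases hm with rfl | rfl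
        · exact hu (by simp [hX])
        · exact hv (by simp [hX])
    -- the set where an invisible robber can hide
  set R : Finset (Fin n) := (S ∪ X)ᶜ with hR
  have hRcard : R.card ≤ k := by
    have hdisj : Disjoint S X := by
      rw [Finset.disjoint_left]; exact hS_not_X
    rw [hR, Finset.card_compl, Finset.card_union_of_disjoint hdisj, hScard, hXcard,
      Fintype.card_fin]
    omega
  -- target positions
  set tf : Fin k → Fin n := fun i =>
    if h : (i : ℕ) < R.card then (R.orderIsoOfFin rfl ⟨i, h⟩ : Fin n) else sf i with htf
  have hR_prop : ∀ v ∈ R, v ∉ S ∧ v ∉ X := by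
    intro v hv
    rw [hR, Finset.mem_compl, Finset.mem_union, not_or] at hv
    exact hv
  have htf_pos : ∀ (i : Fin k) (h : (i : ℕ) < R.card),
      tf i = (R.orderIsoOfFin rfl ⟨i, h⟩ : Fin n) := fun i h => dif_pos h
  have htf_neg : ∀ (i : Fin k), ¬ (i : ℕ) < R.card → tf i = sf i := fun i h => dif_neg h
  have hA : ∀ i, CRStep G (sf i) (tf i) := by
    intro i
    by_cases h : (i : ℕ) < R.card
    · rw [htf_pos i h]
      obtain ⟨hv1, hv2⟩ := hR_prop _ (R.orderIsoOfFin rfl ⟨i, h⟩).2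
      exact Or.inr (adj_of _ _ (hS_not_X _ (hsf_mem i)) hv2
        (fun he => hv1 (he ▸ hsf_mem i)))
    · rw [htf_neg i h]; exact Or.inl rfl
  have hB : ∀ v, (∀ i, G.Adj (sf i) v) → ∃ i, tf i = v := by
    intro v hv
    have hvS : v ∉ S := by
      intro hvS
      obtain ⟨i, hi⟩ := hsf_surj v hvS
      exact G.irrefl (hi ▸ hv i)
    have hvX : v ∉ X := by
      intro hvX
      rw [hX, Finset.mem_insert, Finset.mem_singleton] at hvX
      obtain ⟨p, hp', hpa⟩ := hP3 v hvX
      have hpS : p ∈ S := by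
        rcases hp' with rfl | rfl
        · exact hPS (by simp)
        · exact hPS (by simp)
      obtain ⟨i, hi⟩ := hsf_surj p hpS
      exact hpa (hi ▸ hv i)
    have hvR : v ∈ R := by
      rw [hR, Finset.mem_compl, Finset.mem_union]
      tauto
    set j : Fin R.card := (R.orderIsoOfFin rfl).symm ⟨v, hvR⟩ with hj
    refine ⟨⟨(j : ℕ), lt_of_lt_of_le j.2 hRcard⟩, ?_⟩
    rw [htf_pos ⟨(j : ℕ), lt_of_lt_of_le j.2 hRcard⟩ j.2]
    have h2 : (⟨(j : ℕ), j.2⟩ : Fin R.card) = j := rfl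
    rw [h2, hj]
    exact congrArg Subtype.val ((R.orderIsoOfFin rfl).apply_symm_apply ⟨v, hvR⟩)
  have hC : ∀ v, ∃ i, sf i = v ∨ G.Adj (sf i) v := by
    intro v
    by_cases hvX : v = x₁ ∨ v = x₂
    · obtain ⟨p, hp', hpa⟩ := hP4 v hvX
      have hpS : p ∈ S := by
        rcases hp' with rfl | rfl
        · exact hPS (by simp)
        · exact hPS (by simp)
      obtain ⟨i, hi⟩ := hsf_surj p hpS
      exact ⟨i, Or.inr (hi ▸ hpa)⟩
    · obtain ⟨i, hi⟩ := hsf_surj p₁ (hPS (by simp))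
      by_cases hvp : v = p₁
      · exact ⟨i, Or.inl (hvp ▸ hi)⟩
      · refine ⟨i, Or.inr ?_⟩
        rw [hi]
        refine adj_of _ _ ?_ ?_ (fun h => hvp h.symm)
        · exact hS_not_X _ (hPS (by simp))
        · rw [hX]; simp only [Finset.mem_insert, Finset.mem_singleton]; exact hvX
  have hwin : HCopsWin G k := hcopswin_of_plan G k sf tf hA hB hC
  have : hyperopicCopNumber G ≤ k := Nat.sInf_le hwin
  exact this
end

section
/- If a finite connected graph G has diameter at least 3, then c_H(G) ≤ c(G) + 2. -/
lemma copsWin_card {V : Type*} [Fintype V] [Nonempty V] (G : SimpleGraph V) :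
    CopsWin G (Fintype.card V) := by
  refine ⟨fun _ i => (Fintype.equivFin V).symm i, fun l x i => Or.inl rfl, fun r _ => ?_⟩
  exact ⟨0, Fintype.equivFin V (r 0), Or.inl (by simp)⟩

lemma reduceOption_map_some {V : Type*} (l : List V) :
    (l.map some).reduceOption = l := by
  induction l with
  | nil => rfl
  | cons a l ih => simp [List.reduceOption_cons_of_some, ih]

/-- If a finite connected graph `G` has diameter at least 3, then
`c_H(G) ≤ c(G) + 2`. -/
theorem hyperopicCopNumber_le_of_three_le_diam {V : Type*} [Fintype V]
    (G : SimpleGraph V) (hG : G.Connected) (hd : 3 ≤ G.diam) :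
    hyperopicCopNumber G ≤ copNumber G + 2 := by
  have hne : Nonempty V := hG.nonempty
  obtain ⟨u, v, huv⟩ := G.exists_dist_eq_diam
  have huv3 : 3 ≤ G.dist u v := huv ▸ hd
  have hmem : Fintype.card V ∈ {k | CopsWin G k} := copsWin_card G
  have hwin : CopsWin G (copNumber G) := Nat.sInf_mem ⟨_, hmem⟩
  obtain ⟨F, hFstep, hFwin⟩ := hwin
  set F' : List (Option V) → Fin (copNumber G + 2) → V := fun l i =>
    if h : (i : ℕ) < copNumber G then F l.reduceOption ⟨i, h⟩
    else if (i : ℕ) = copNumber G then u else v with hF'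
  have hF'step : ∀ l o i, CRStep G (F' l i) (F' (l ++ [o]) i) := by
    intro l o i
    by_cases h : (i : ℕ) < copNumber G
    · simp only [hF', dif_pos h]
      cases o with
      | none =>
          exact Or.inl (by simp [List.reduceOption_append, List.reduceOption_cons_of_none])
      | some x =>
          have := hFstep l.reduceOption x ⟨i, h⟩
          simpa [List.reduceOption_append, List.reduceOption_cons_of_some] using this
    · simp [hF', dif_neg h, CRStep]
  -- the robber is never adjacent to all cops
  have hvis : ∀ (l : List (Option V)) (w : V), ¬ ∀ i, G.Adj (F' l i) w := by
    intro l w hall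
    have h1 : G.Adj u w := by
      have := hall ⟨copNumber G, by omega⟩
      simpa [hF'] using this
    have h2 : G.Adj v w := by
      have := hall ⟨copNumber G + 1, by omega⟩
      simpa [hF'] using this
    have d1 : G.dist u w = 1 := SimpleGraph.dist_eq_one_iff_adj.mpr h1
    have d2 : G.dist w v = 1 := by
      rw [SimpleGraph.dist_comm]; exact SimpleGraph.dist_eq_one_iff_adj.mpr h2
    have := hG.dist_triangle (u := u) (v := w) (w := v)
    omega
  refine Nat.sInf_le ⟨F', hF'step, ?_⟩
  intro r hr
  have hobs : ∀ n, hObsList G F' r n = (robberHist r n).map some := by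
    intro n
    induction n with
    | zero => simp [hObsList, robberHist]
    | succ n ih =>
        rw [hObsList, ih, if_neg (hvis _ _)]
        simp [robberHist, List.range_succ]
  have hF'eval : ∀ n (i : Fin (copNumber G)) (h : (i : ℕ) < copNumber G + 2),
      F' (hObsList G F' r n) ⟨i, h⟩ = F (robberHist r n) i := by
    intro n i h
    rw [hobs]
    simp [hF', i.isLt, reduceOption_map_some]
  obtain ⟨n, i, hi⟩ := hFwin r hr
  refine ⟨n, ⟨i, by omega⟩, ?_⟩
  rcases hi with h | h
  · exact Or.inl ((hF'eval n i _).trans h)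
  · exact Or.inr ((hF'eval (n+1) i _).trans h)
end

section
/- If a finite connected graph G has diameter at least 3 and c_H(G) = c(G) + 2, then G contains a triangle or a four-cycle (equivalently, G has girth at most 4). -/
open Classical in
/-- Auxiliary shadow cop position, by recursion on the reversed observation history. -/
noncomputable def shadowAux {V : Type*} (c : List (Option V) → V) (v0 : V) :
    List (Option V) → V
  | [] => v0
  | o :: t => if c t.reverse = c ((o :: t).reverse) then shadowAux c v0 t else c t.reverse

open Classical in
lemma shadowAux_snoc {V : Type*} (c : List (Option V) → V) (v0 : V)
    (l : List (Option V)) (o : Option V) :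
    shadowAux c v0 (l ++ [o]).reverse =
      if c l = c (l ++ [o]) then shadowAux c v0 l.reverse else c l := by
  rw [List.reverse_append]
  simp [shadowAux, List.reverse_reverse]

/-- A triangle forces girth at most `3`. -/
lemma girth_le_three_of_triangle {V : Type*} {G : SimpleGraph V} {a b c : V}
    (hab : G.Adj a b) (hbc : G.Adj b c) (hca : G.Adj c a) : G.girth ≤ 3 := by
  have hw : ((SimpleGraph.Walk.cons hab
      (SimpleGraph.Walk.cons hbc (SimpleGraph.Walk.cons hca SimpleGraph.Walk.nil)))).IsCycle := by
    simp [SimpleGraph.Walk.isCycle_def, SimpleGraph.Walk.isTrail_def, hab.ne, hbc.ne, hca.ne,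
      hab.ne', hbc.ne', hca.ne', Sym2.eq_iff]
  have h3 : G.egirth ≤ 3 := by
    refine le_trans (iInf_le_of_le a (iInf_le_of_le _ (iInf_le_of_le hw le_rfl))) ?_
    simp
  have := ENat.toNat_le_toNat h3 (by simp)
  simpa [SimpleGraph.girth] using this

/-- If a finite connected graph `G` has diameter at least 3 and
`c_H(G) = c(G) + 2`, then `G` contains a triangle or a four-cycle (equivalently,
`G` has girth at most 4). -/
theorem girth_le_four_of_three_le_diam_of_hyperopic {V : Type*} [Fintype V]
    (G : SimpleGraph V) (hG : G.Connected) (hd : 3 ≤ G.diam)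
    (h : hyperopicCopNumber G = copNumber G + 2) :
    G.girth ≤ 4 := by
  classical
  by_contra hg4
  push_neg at hg4
  have hne : Nonempty V := hG.nonempty
  have hnt : Nontrivial V := G.nontrivial_of_diam_ne_zero (by omega)
  obtain ⟨v⟩ := hne
  -- `G` is triangle-free
  have hTF : ∀ a b c : V, G.Adj a b → G.Adj b c → G.Adj c a → False := by
    intro a b c hab hbc hca
    have := girth_le_three_of_triangle hab hbc hca
    omega
  -- every vertex has a neighbour
  have hnbr : ∀ u : V, ∃ w, G.Adj u w := by
    intro u
    obtain ⟨w, hw⟩ := exists_ne u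
    obtain ⟨p⟩ := hG.preconnected u w
    cases p with
    | nil => exact absurd rfl hw.symm
    | cons h q => exact ⟨_, h⟩
  -- placing a cop on every vertex wins
  have hall : CopsWin G (Fintype.card V) := by
    refine ⟨fun _ i => (Fintype.equivFin V).symm i, fun _ _ _ => Or.inl rfl, fun r hr => ?_⟩
    exact ⟨0, Fintype.equivFin V (r 0), Or.inl (by simp)⟩
  have hmem : CopsWin G (copNumber G) := by
    have := Nat.sInf_mem (show {k | CopsWin G k}.Nonempty from ⟨_, hall⟩); exact this
  set k := copNumber G with hkdef
  have hk : 0 < k := by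
    rcases Nat.eq_zero_or_pos k with h0 | h
    · exfalso
      rw [h0] at hmem
      obtain ⟨F, _, hwin⟩ := hmem
      obtain ⟨n, i, _⟩ := hwin (fun _ => v) (fun _ => Or.inl rfl)
      exact i.elim0
    · exact h
  obtain ⟨F₀, hmove, hwin⟩ := hmem
  set i0 : Fin k := ⟨0, hk⟩ with hi0
  obtain ⟨v0, hadj0⟩ := hnbr (F₀ [] i0)
  -- turn observation histories into vertex histories
  set g : List (Option V) → List V := fun l => l.map (fun o => o.getD v0) with hgdef
  have hgsnoc : ∀ l o, g (l ++ [o]) = g l ++ [o.getD v0] := by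
    intro l o; simp [hgdef]
  have hgsome : ∀ L : List V, g (L.map some) = L := by
    intro L; simp [hgdef, List.map_map, Function.comp_def]
  set c0 : List (Option V) → V := fun l => F₀ (g l) i0 with hc0
  set S : List (Option V) → V := fun l => shadowAux c0 v0 l.reverse with hS
  have hSsnoc : ∀ l o, S (l ++ [o]) = if c0 l = c0 (l ++ [o]) then S l else c0 l := by
    intro l o; exact shadowAux_snoc c0 v0 l o
  -- the shadow cop is always adjacent to cop 0
  have hSadj : ∀ l, G.Adj (c0 l) (S l) := by
    intro l
    induction l using List.reverseRecOn with
    | nil => simpa [hS, hc0, hgdef, shadowAux] using hadj0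
    | append_singleton l o ih =>
      rw [hSsnoc]
      by_cases he : c0 l = c0 (l ++ [o])
      · rw [if_pos he, ← he]; exact ih
      · rw [if_neg he]
        have hst := hmove (g l) (o.getD v0) i0
        rw [← hgsnoc] at hst
        rcases hst with h1 | h1
        · exact absurd h1 he
        · exact h1.symm
  set F : List (Option V) → Fin (k + 1) → V :=
    fun l i => if h : (i : ℕ) < k then F₀ (g l) ⟨i, h⟩ else S l with hF
  have hF0 : ∀ l, F l ⟨0, by omega⟩ = c0 l := by
    intro l; simp [hF, hk, hc0, hi0]
  have hFk : ∀ l, F l ⟨k, by omega⟩ = S l := by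
    intro l; simp [hF]
  have hHwin : HCopsWin G (k + 1) := by
    refine ⟨F, ?_, ?_⟩
    · intro l o i
      by_cases hi : (i : ℕ) < k
      · simp only [hF, dif_pos hi]
        rw [hgsnoc]
        exact hmove (g l) (o.getD v0) ⟨i, hi⟩
      · simp only [hF, dif_neg hi]
        rw [hSsnoc]
        by_cases he : c0 l = c0 (l ++ [o])
        · rw [if_pos he]; exact Or.inl rfl
        · rw [if_neg he]; exact Or.inr (hSadj l).symm
    · intro r hr
      -- the robber is always visible
      have hobs : ∀ n, hObsList G F r n = (robberHist r n).map some := by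
        intro n
        induction n with
        | zero => simp [hObsList, robberHist]
        | succ n ih =>
          rw [hObsList, ih]
          have hvis : ¬ ∀ i, G.Adj (F ((robberHist r n).map some) i) (r n) := by
            intro hall2
            have h0 := hall2 ⟨0, by omega⟩
            have hkk := hall2 ⟨k, by omega⟩
            rw [hF0] at h0
            rw [hFk] at hkk
            exact hTF _ _ _ (hSadj _) hkk h0.symm
          rw [if_neg hvis]
          have hrh : robberHist r (n + 1) = robberHist r n ++ [r n] := by
            simp [robberHist, List.range_succ]
          rw [hrh, List.map_append]
          rfl
      obtain ⟨n, i, hcap⟩ := hwin r hr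
      refine ⟨n, ⟨i, Nat.lt_succ_of_lt i.isLt⟩, ?_⟩
      have key : ∀ m, F (hObsList G F r m) ⟨(i : ℕ), Nat.lt_succ_of_lt i.isLt⟩
          = F₀ (robberHist r m) i := by
        intro m
        rw [hobs]
        simp only [hF, dif_pos i.isLt]
        rw [hgsome]
      rw [key n, key (n + 1)]
      exact hcap
  have hle : hyperopicCopNumber G ≤ k + 1 := Nat.sInf_le hHwin
  omega
end

section
/- If G is a finite connected bipartite graph of diameter 3 on n ≥ 23 vertices, then c_H(G) < ⌈n/2⌉. -/
/-- The pouncing strategy: sit on the vertices `e i`; as soon as the robber is seen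
(first observation), the designated cop `p x` pounces on the observed vertex `x`. -/
def stratF {V : Type*} {k : ℕ} (e : Fin k → V) (p : V → Fin k) :
    List (Option V) → Fin k → V
  | [], i => e i
  | none :: _, i => e i
  | some x :: _, i => if i = p x then x else e i

lemma hcw {V : Type*} (G : SimpleGraph V) (D : Finset V)
    (hdom : ∀ v, ∃ u ∈ D, u = v ∨ G.Adj u v)
    (hvis : ∀ v, ∃ u ∈ D, ¬ G.Adj u v) : HCopsWin G D.card := by
  classical
  let e : Fin D.card → V := fun i => (D.equivFin.symm i : V)
  have he : ∀ u ∈ D, ∃ i, e i = u := fun u hu => ⟨D.equivFin ⟨u, hu⟩, by simp [e]⟩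
  have hpounce : ∀ v : V, ∃ i : Fin D.card, e i = v ∨ G.Adj (e i) v := by
    intro v
    obtain ⟨u, hu, h⟩ := hdom v
    obtain ⟨i, hi⟩ := he u hu
    exact ⟨i, hi ▸ h⟩
  choose p hp using hpounce
  refine ⟨stratF e p, ?_, ?_⟩
  · intro l o i
    cases l with
    | nil =>
      cases o with
      | none => exact Or.inl rfl
      | some x =>
        show CRStep G (e i) (if i = p x then x else e i)
        by_cases h : i = p x
        · subst h; simpa [if_pos, CRStep] using hp x
        · rw [if_neg h]; exact Or.inl rfl
    | cons a t =>
      cases a with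
      | none => exact Or.inl rfl
      | some x => exact Or.inl rfl
  · intro r hr
    refine ⟨0, p (r 0), Or.inr ?_⟩
    have h1 : hObsList G (stratF e p) r 1 = [some (r 0)] := by
      have hv : ¬ ∀ i, G.Adj (stratF e p ([] : List (Option V)) i) (r 0) := by
        obtain ⟨u, hu, hnadj⟩ := hvis (r 0)
        obtain ⟨i, hi⟩ := he u hu
        intro hall
        have h2 := hall i
        simp only [stratF] at h2
        rw [hi] at h2
        exact hnadj h2
      simp only [hObsList, List.nil_append]
      simp [hv]
    rw [h1]
    simp [stratF]


section Combinatorics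

open Finset

variable {V : Type*} [Fintype V] (G : SimpleGraph V) [DecidableRel G.Adj]

set_option linter.unusedSectionVars false

/-- There is a vertex not satisfying `P` (a vertex of the other colour). -/
lemma exists_other_color (P : V → Prop)
    (hP : ∀ u v, G.Adj u v → (P u ↔ ¬ P v))
    (hnbr : ∀ v : V, ∃ w, G.Adj v w) [Nonempty V] : ∃ v, ¬ P v := by
  obtain ⟨v⟩ := ‹Nonempty V›
  by_cases h : P v
  · obtain ⟨w, hw⟩ := hnbr v
    exact ⟨w, (hP v w hw).mp h⟩
  · exact ⟨v, h⟩

/-- Case: the colour class of `P` is small: put cops on it plus one vertex of the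
other colour. -/
lemma caseSmall (P : V → Prop) [DecidablePred P]
    (hP : ∀ u v, G.Adj u v → (P u ↔ ¬ P v))
    (hnbr : ∀ v : V, ∃ w, G.Adj v w) [Nonempty V] :
    ∃ D : Finset V,
      D.card ≤ (Finset.univ.filter P).card + 1 ∧
      (∀ v, ∃ u ∈ D, u = v ∨ G.Adj u v) ∧ (∀ v, ∃ u ∈ D, ¬ G.Adj u v) := by
  classical
  obtain ⟨b₀, hb₀⟩ := exists_other_color G P hP hnbr
  refine ⟨insert b₀ (Finset.univ.filter P), Finset.card_insert_le _ _, ?_, ?_⟩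
  · intro v
    by_cases hv : P v
    · exact ⟨v, by simp [hv], Or.inl rfl⟩
    · obtain ⟨w, hw⟩ := hnbr v
      have hw0 : P w := by
        have := hP v w hw
        tauto
      exact ⟨w, by simp [hw0], Or.inr hw.symm⟩
  · intro v
    by_cases hv : P v
    · exact ⟨v, by simp [hv], G.irrefl⟩
    · refine ⟨b₀, by simp, fun hadj => ?_⟩
      exact hb₀ ((hP b₀ v hadj).mpr hv)

/-- Case: every vertex of the other colour has degree at least 5: cops on the `P` class
minus four neighbours of a fixed other-colour vertex, plus that vertex. -/
lemma caseDense (P : V → Prop) [DecidablePred P]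
    (hP : ∀ u v, G.Adj u v → (P u ↔ ¬ P v))
    (hnbr : ∀ v : V, ∃ w, G.Adj v w) [Nonempty V]
    (hdeg : ∀ v, ¬ P v → 5 ≤ G.degree v)
    (hA : 5 ≤ (Finset.univ.filter P).card) :
    ∃ D : Finset V,
      D.card ≤ (Finset.univ.filter P).card - 3 ∧
      (∀ v, ∃ u ∈ D, u = v ∨ G.Adj u v) ∧ (∀ v, ∃ u ∈ D, ¬ G.Adj u v) := by
  classical
  set A : Finset V := Finset.univ.filter P with hAdef
  obtain ⟨bs, hbs⟩ := exists_other_color G P hP hnbr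
  have hdegbs : 4 ≤ (G.neighborFinset bs).card := by
    have := hdeg bs hbs
    rw [← G.card_neighborFinset_eq_degree] at this
    omega
  obtain ⟨X, hXsub, hXcard⟩ := Finset.exists_subset_card_eq hdegbs
  have hXA : X ⊆ A := by
    intro x hx
    have hadj : G.Adj bs x := by
      have := hXsub hx
      rwa [SimpleGraph.mem_neighborFinset] at this
    have hx' : P x := by have := hP bs x hadj; tauto
    simp [hAdef, hx']
  have hAX : (A \ X).card = A.card - 4 := by rw [Finset.card_sdiff_of_subset hXA, hXcard]
  refine ⟨insert bs (A \ X), ?_, ?_, ?_⟩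
  · calc (insert bs (A \ X)).card ≤ (A \ X).card + 1 := Finset.card_insert_le _ _
      _ ≤ A.card - 3 := by omega
  · intro v
    by_cases hv : P v
    · by_cases hvX : v ∈ X
      · refine ⟨bs, by simp, Or.inr ?_⟩
        have := hXsub hvX
        rwa [SimpleGraph.mem_neighborFinset] at this
      · exact ⟨v, by simp [hAdef, hv, hvX], Or.inl rfl⟩
    · by_cases hvb : v = bs
      · exact ⟨bs, by simp, Or.inl hvb.symm⟩
      · have h5 : 5 ≤ (G.neighborFinset v).card := by
          have := hdeg v hv
          rwa [← G.card_neighborFinset_eq_degree] at this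
        have hsub : G.neighborFinset v ⊆ A := by
          intro x hx
          rw [SimpleGraph.mem_neighborFinset] at hx
          have hx' : P x := by have := hP v x hx; tauto
          simp [hAdef, hx']
        have hnonempty : (G.neighborFinset v \ X).Nonempty := by
          rw [← Finset.card_pos]
          have h1 : (G.neighborFinset v).card - X.card ≤ (G.neighborFinset v \ X).card :=
            Finset.le_card_sdiff _ _
          omega
        obtain ⟨u, hu⟩ := hnonempty
        rw [Finset.mem_sdiff] at hu
        refine ⟨u, ?_, Or.inr ?_⟩
        · have huA : u ∈ A := hsub hu.1
          simp [Finset.mem_sdiff, huA, hu.2]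
        · have := hu.1
          rw [SimpleGraph.mem_neighborFinset] at this
          exact this.symm
  · intro v
    by_cases hv : P v
    · have hnonempty : (A \ X).Nonempty := by
        rw [← Finset.card_pos]
        omega
      obtain ⟨u, hu⟩ := hnonempty
      have hu0 : P u := by
        have := (Finset.mem_sdiff.mp hu).1
        simpa [hAdef] using this
      refine ⟨u, by simp [hu], fun hadj => ?_⟩
      exact ((hP u v hadj).mp hu0) hv
    · refine ⟨bs, by simp, fun hadj => ?_⟩
      exact hbs ((hP bs v hadj).mpr hv)

/-- Case: both colour classes contain a vertex of degree at most 4. -/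
lemma caseSparse (P : V → Prop) [DecidablePred P]
    (hP : ∀ u v, G.Adj u v → (P u ↔ ¬ P v))
    (hnbr : ∀ v : V, ∃ w, G.Adj v w)
    (hcn : ∀ u v : V, u ≠ v → (P u ↔ P v) → ∃ w, G.Adj u w ∧ G.Adj v w)
    {a' b' : V} (ha' : P a') (hb' : ¬ P b')
    (hda : G.degree a' ≤ 4) (hdb : G.degree b' ≤ 4) :
    ∃ D : Finset V,
      D.card ≤ 8 ∧
      (∀ v, ∃ u ∈ D, u = v ∨ G.Adj u v) ∧ (∀ v, ∃ u ∈ D, ¬ G.Adj u v) := by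
  classical
  refine ⟨G.neighborFinset a' ∪ G.neighborFinset b', ?_, ?_, ?_⟩
  · calc (G.neighborFinset a' ∪ G.neighborFinset b').card
        ≤ (G.neighborFinset a').card + (G.neighborFinset b').card := Finset.card_union_le _ _
      _ ≤ 8 := by
        rw [G.card_neighborFinset_eq_degree, G.card_neighborFinset_eq_degree]
        omega
  · intro v
    by_cases hv : P v
    · by_cases hva : v = a'
      · obtain ⟨w, hw⟩ := hnbr a'
        exact ⟨w, by simp [SimpleGraph.mem_neighborFinset, hw], Or.inr (hva ▸ hw.symm)⟩
      · obtain ⟨w, hw1, hw2⟩ := hcn a' v (fun h => hva h.symm) (by tauto)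
        exact ⟨w, by simp [SimpleGraph.mem_neighborFinset, hw1], Or.inr hw2.symm⟩
    · by_cases hvb : v = b'
      · obtain ⟨w, hw⟩ := hnbr b'
        exact ⟨w, by simp [SimpleGraph.mem_neighborFinset, hw], Or.inr (hvb ▸ hw.symm)⟩
      · obtain ⟨w, hw1, hw2⟩ := hcn b' v (fun h => hvb h.symm) (by tauto)
        exact ⟨w, by simp [SimpleGraph.mem_neighborFinset, hw1], Or.inr hw2.symm⟩
  · intro v
    by_cases hv : P v
    · obtain ⟨w, hw⟩ := hnbr b'
      have hw0 : P w := by have := hP b' w hw; tauto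
      refine ⟨w, by simp [SimpleGraph.mem_neighborFinset, hw], fun hadj => ?_⟩
      exact ((hP w v hadj).mp hw0) hv
    · obtain ⟨w, hw⟩ := hnbr a'
      have hw1 : ¬ P w := by have := hP a' w hw; tauto
      refine ⟨w, by simp [SimpleGraph.mem_neighborFinset, hw], fun hadj => ?_⟩
      exact hw1 ((hP w v hadj).mpr hv)

end Combinatorics

/-- If `G` is a finite connected bipartite graph of diameter 3 on
`n ≥ 23` vertices, then `c_H(G) < ⌈n/2⌉`. -/
theorem hyperopicCopNumber_lt_of_bipartite_diam_three {V : Type*} [Fintype V]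
    (G : SimpleGraph V) (hG : G.Connected) (hbip : G.Colorable 2)
    (hd : G.diam = 3) (hn : 23 ≤ Fintype.card V) :
    hyperopicCopNumber G < (Fintype.card V + 1) / 2 := by
  classical
  obtain ⟨C⟩ := hbip
  have hnonempty : Nonempty V := by
    rw [← Fintype.card_pos_iff]; omega
  set n := Fintype.card V with hn_def
  set t := (n + 1) / 2 with ht_def
  have ht12 : 12 ≤ t := by omega
  -- every vertex has a neighbour
  have hnbr : ∀ v : V, ∃ w, G.Adj v w := by
    intro v
    obtain ⟨u, hu⟩ := Fintype.exists_ne_of_one_lt_card (by omega) v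
    obtain ⟨pw⟩ := hG v u
    cases pw with
    | nil => exact absurd rfl hu
    | cons h _ => exact ⟨_, h⟩
  -- walk parity
  have hpar : ∀ {u v : V} (pw : G.Walk u v), (Even pw.length ↔ C u = C v) := by
    intro u v pw
    induction pw with
    | nil => simp
    | cons h q ih =>
      have hne := C.valid h
      rw [SimpleGraph.Walk.length_cons, Nat.even_add_one, ih]
      constructor
      · intro hx; omega
      · intro hx; omega
  -- common neighbours of same-colour vertices
  have hcn : ∀ u v : V, u ≠ v → C u = C v → ∃ w, G.Adj u w ∧ G.Adj v w := by
    intro u v huv hc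
    have h3 : G.dist u v ≤ 3 := by
      have := G.dist_le_diam (u := u) (v := v)
        (SimpleGraph.ediam_ne_top_of_diam_ne_zero (by rw [hd]; norm_num))
      omega
    have hne0 : G.dist u v ≠ 0 := fun h0 => huv (hG.dist_eq_zero_iff.mp h0)
    obtain ⟨pw, hpw⟩ := hG.exists_walk_length_eq_dist u v
    have heven : Even pw.length := (hpar pw).mpr hc
    have hlen2 : pw.length = 2 := by
      obtain ⟨c, hc'⟩ := heven
      omega
    cases pw with
    | nil => simp at hlen2
    | cons h q =>
      cases q with
      | nil => simp at hlen2
      | cons h2 q2 =>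
        have hq2 : q2.length = 0 := by
          rw [SimpleGraph.Walk.length_cons, SimpleGraph.Walk.length_cons] at hlen2
          omega
        have heq := SimpleGraph.Walk.eq_of_length_eq_zero hq2
        exact ⟨_, h, (heq ▸ h2).symm⟩
  -- the two colour-class predicates
  set P : V → Prop := fun v => C v = 0 with hPdef
  set Q : V → Prop := fun v => ¬ C v = 0 with hQdef
  have hP : ∀ u v, G.Adj u v → (P u ↔ ¬ P v) := by
    intro u v h
    have := C.valid h
    simp only [hPdef]
    constructor
    · intro h1 h2; omega
    · intro h1; omega
  have hQ : ∀ u v, G.Adj u v → (Q u ↔ ¬ Q v) := by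
    intro u v h
    have := hP u v h
    simp only [hQdef, hPdef] at *
    tauto
  set A : Finset V := Finset.univ.filter P with hAdef
  set B : Finset V := Finset.univ.filter Q with hBdef
  have hAB : A.card + B.card = n := by
    have h := Finset.card_filter_add_card_filter_not
      (s := (Finset.univ : Finset V)) (p := P)
    simpa [hAdef, hBdef, hQdef, hPdef, Finset.card_univ, hn_def] using h
  -- it suffices to find a suitable dominating set of size < t
  suffices hsuff : ∃ D : Finset V, D.card < t ∧
      (∀ v, ∃ u ∈ D, u = v ∨ G.Adj u v) ∧ (∀ v, ∃ u ∈ D, ¬ G.Adj u v) by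
    obtain ⟨D, h1, h2, h3⟩ := hsuff
    exact lt_of_le_of_lt (Nat.sInf_le (hcw G D h2 h3)) h1
  by_cases h1 : A.card + 1 < t
  · obtain ⟨D, hc, hdom, hvis⟩ := caseSmall G P hP hnbr
    exact ⟨D, by rw [← hAdef] at hc; omega, hdom, hvis⟩
  by_cases h2 : B.card + 1 < t
  · obtain ⟨D, hc, hdom, hvis⟩ := caseSmall G Q hQ hnbr
    exact ⟨D, by rw [← hBdef] at hc; omega, hdom, hvis⟩
  -- now both classes are nearly balanced
  have hbal : A.card ≤ t + 1 ∧ B.card ≤ t + 1 ∧ t - 1 ≤ A.card ∧ t - 1 ≤ B.card := by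
    omega
  by_cases hb5 : ∀ v, ¬ P v → 5 ≤ G.degree v
  · obtain ⟨D, hc, hdom, hvis⟩ := caseDense G P hP hnbr hb5 (by rw [← hAdef]; omega)
    exact ⟨D, by rw [← hAdef] at hc; omega, hdom, hvis⟩
  by_cases ha5 : ∀ v, ¬ Q v → 5 ≤ G.degree v
  · obtain ⟨D, hc, hdom, hvis⟩ := caseDense G Q hQ hnbr ha5 (by rw [← hBdef]; omega)
    exact ⟨D, by rw [← hBdef] at hc; omega, hdom, hvis⟩
  push_neg at hb5 ha5
  obtain ⟨b', hb'1, hb'2⟩ := hb5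
  obtain ⟨a', ha'1, ha'2⟩ := ha5
  have ha'P : P a' := by
    have h' : ¬ ¬ C a' = 0 := ha'1
    simp only [hPdef]
    omega
  have hcnP : ∀ u v : V, u ≠ v → (P u ↔ P v) → ∃ w, G.Adj u w ∧ G.Adj v w := by
    intro u v huv hiff
    apply hcn u v huv
    simp only [hPdef] at hiff
    omega
  obtain ⟨D, hc, hdom, hvis⟩ := caseSparse G P hP hnbr hcnP ha'P hb'1 (by omega) (by omega)
  exact ⟨D, by omega, hdom, hvis⟩
end

section
/- If a finite connected graph G has diameter 2, then c_H(G) ≤ min{δ(G) + 1, Δ(G)}, where δ(G) and Δ(G) denote the minimum and maximum degree of G. -/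
open Classical in
/-- Move some cop (one that can legally reach `w`) onto `w`; everyone else stays. -/
noncomputable def moveTo {V : Type*} (G : SimpleGraph V) {k : ℕ} (c : Fin k → V) (w : V) :
    Fin k → V :=
  if h : ∃ i, CRStep G (c i) w then fun i => if i = h.choose then w else c i else c

lemma moveTo_step {V : Type*} (G : SimpleGraph V) {k : ℕ} (c : Fin k → V) (w : V) (i : Fin k) :
    CRStep G (c i) (moveTo G c w i) := by
  unfold moveTo
  split
  · next h =>
    by_cases he : i = h.choose
    · simp only [he, if_pos rfl]
      exact he ▸ h.choose_spec
    · simp only [if_neg he]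
      exact Or.inl rfl
  · exact Or.inl rfl

lemma moveTo_hits {V : Type*} (G : SimpleGraph V) {k : ℕ} {c : Fin k → V} {w : V}
    (h : ∃ i, CRStep G (c i) w) : ∃ i, moveTo G c w i = w := by
  refine ⟨h.choose, ?_⟩
  unfold moveTo
  rw [dif_pos h, if_pos rfl]

/-- Strategy for the `δ+1` case: cops sit on a closed neighbourhood; if the robber is
seen at `w`, a cop moves to `w`. -/
noncomputable def stratMin {V : Type*} (G : SimpleGraph V) {k : ℕ} (c0 : Fin k → V) :
    List (Option V) → Fin k → V
  | [] => c0
  | (none :: _) => c0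
  | (some w :: _) => moveTo G c0 w

/-- Strategy for the `Δ` case: cops sit on an open neighbourhood `N(u)`; upon an invisible
observation one cop moves to `u` (positions `c1`), and then reacts to the next observation. -/
noncomputable def stratMax {V : Type*} (G : SimpleGraph V) {k : ℕ} (c0 c1 : Fin k → V) :
    List (Option V) → Fin k → V
  | [] => c0
  | [none] => c1
  | (none :: none :: _) => c0
  | (none :: some w :: _) => moveTo G c1 w
  | (some w :: _) => moveTo G c0 w

/-- In a graph of diameter at most 2, every vertex is within two steps of `u`,
witnessed explicitly. -/
lemma reach_two {V : Type*} [Fintype V] (G : SimpleGraph V) (hG : G.Connected)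
    (hd : G.diam = 2) (u w : V) :
    w = u ∨ G.Adj u w ∨ ∃ x, G.Adj u x ∧ G.Adj x w := by
  have hne : G.ediam ≠ ⊤ :=
    SimpleGraph.ediam_ne_top_of_diam_ne_zero (by rw [hd]; exact two_ne_zero)
  have h2 : G.dist u w ≤ 2 := by
    have := G.dist_le_diam hne (u := u) (v := w)
    omega
  obtain ⟨p, hp⟩ := hG.exists_walk_length_eq_dist u w
  have hl : p.length = 0 ∨ p.length = 1 ∨ p.length = 2 := by omega
  rcases hl with hl | hl | hl
  · exact Or.inl (SimpleGraph.Walk.eq_of_length_eq_zero hl).symm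
  · refine Or.inr (Or.inl ?_)
    have ha := p.adj_getVert_succ (i := 0) (by omega)
    rw [p.getVert_zero] at ha
    have h1 : p.getVert 1 = w := by rw [← hl]; exact p.getVert_length
    rwa [h1] at ha
  · refine Or.inr (Or.inr ⟨p.getVert 1, ?_, ?_⟩)
    · have ha := p.adj_getVert_succ (i := 0) (by omega)
      rwa [p.getVert_zero] at ha
    · have ha := p.adj_getVert_succ (i := 1) (by omega)
      have h1 : p.getVert 2 = w := by rw [← hl]; exact p.getVert_length
      rwa [h1] at ha

lemma hcopswin_minDegree {V : Type*} [Fintype V] (G : SimpleGraph V) [DecidableRel G.Adj]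
    (hG : G.Connected) (hd : G.diam = 2) : HCopsWin G (G.minDegree + 1) := by
  classical
  have hne : Nonempty V := hG.nonempty
  obtain ⟨u, hu⟩ := G.exists_minimal_degree_vertex
  set k := G.minDegree + 1 with hk
  set s : Finset V := insert u (G.neighborFinset u) with hs
  have hcard : s.card = k := by
    rw [hs, Finset.card_insert_of_notMem (G.notMem_neighborFinset_self u),
      G.card_neighborFinset_eq_degree, ← hu, hk]
  have e : {x // x ∈ s} ≃ Fin k := Fintype.equivFinOfCardEq (by rw [Fintype.card_coe, hcard])
  set c0 : Fin k → V := fun i => ((e.symm i : {x // x ∈ s}) : V) with hc0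
  have hc0mem : ∀ i, c0 i ∈ s := fun i => (e.symm i).2
  have hc0surj : ∀ v ∈ s, ∃ i, c0 i = v := by
    intro v hv
    exact ⟨e ⟨v, hv⟩, by rw [hc0]; simp⟩
  have hdom : ∀ w, ∃ i, CRStep G (c0 i) w := by
    intro w
    rcases reach_two G hG hd u w with h | h | ⟨x, hx1, hx2⟩
    · obtain ⟨i, hi⟩ := hc0surj u (Finset.mem_insert_self u _)
      exact ⟨i, Or.inl (hi.trans h.symm)⟩
    · have hw : w ∈ s := Finset.mem_insert_of_mem ((G.mem_neighborFinset u w).mpr h)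
      obtain ⟨i, hi⟩ := hc0surj w hw
      exact ⟨i, Or.inl hi⟩
    · have hw : x ∈ s := Finset.mem_insert_of_mem ((G.mem_neighborFinset u x).mpr hx1)
      obtain ⟨i, hi⟩ := hc0surj x hw
      exact ⟨i, Or.inr (hi ▸ hx2)⟩
  refine ⟨stratMin G c0, ?_, ?_⟩
  · intro l o i
    cases l with
    | nil =>
      cases o with
      | none => exact Or.inl rfl
      | some w => exact moveTo_step G c0 w i
    | cons a t =>
      cases a with
      | none => exact Or.inl rfl
      | some w => exact Or.inl rfl
  · intro r hr
    set F := stratMin G c0 with hF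
    by_cases h0 : ∀ i, G.Adj (c0 i) (r 0)
    · -- robber invisible at time 0: robber must be on a cop
      obtain ⟨i0, hi0⟩ := hc0surj u (Finset.mem_insert_self u _)
      have hadj : G.Adj u (r 0) := hi0 ▸ h0 i0
      have hw : r 0 ∈ s := Finset.mem_insert_of_mem ((G.mem_neighborFinset u (r 0)).mpr hadj)
      obtain ⟨i, hi⟩ := hc0surj (r 0) hw
      exact ⟨0, i, Or.inl hi⟩
    · -- robber visible at time 0: a cop moves onto it
      have hobs0 : hObsList G F r 0 = [] := rfl
      have hF0 : F [] = c0 := rfl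
      have hobs1 : hObsList G F r 1 = [some (r 0)] := by
        show hObsList G F r 0 ++ [_] = _
        rw [hobs0, hF0, if_neg h0]
        rfl
      obtain ⟨i, hi⟩ := moveTo_hits G (hdom (r 0))
      refine ⟨0, i, Or.inr ?_⟩
      rw [hobs1]
      exact hi

lemma hcopswin_maxDegree {V : Type*} [Fintype V] (G : SimpleGraph V) [DecidableRel G.Adj]
    (hG : G.Connected) (hd : G.diam = 2) : HCopsWin G G.maxDegree := by
  classical
  have hne : Nonempty V := hG.nonempty
  -- the maximum degree is at least 2
  have hD2 : 2 ≤ G.maxDegree := by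
    obtain ⟨a, b, hab⟩ := G.exists_dist_eq_diam
    rw [hd] at hab
    obtain ⟨p, hp⟩ := hG.exists_walk_length_eq_dist a b
    rw [hab] at hp
    have hne' : a ≠ b := by
      intro h
      rw [h, SimpleGraph.dist_self] at hab
      omega
    have ha1 : G.Adj a (p.getVert 1) := by
      have := p.adj_getVert_succ (i := 0) (by omega)
      rwa [p.getVert_zero] at this
    have ha2 : G.Adj (p.getVert 1) b := by
      have := p.adj_getVert_succ (i := 1) (by omega)
      have h2 : p.getVert 2 = b := by rw [← hp]; exact p.getVert_length
      rwa [h2] at this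
    have hm : 1 < (G.neighborFinset (p.getVert 1)).card := by
      refine Finset.one_lt_card.mpr ⟨a, ?_, b, ?_, hne'⟩
      · exact (G.mem_neighborFinset _ _).mpr ha1.symm
      · exact (G.mem_neighborFinset _ _).mpr ha2
    have := G.degree_le_maxDegree (p.getVert 1)
    rw [← G.card_neighborFinset_eq_degree] at this
    omega
  obtain ⟨u, hu⟩ := G.exists_maximal_degree_vertex
  set k := G.maxDegree with hk
  set s : Finset V := G.neighborFinset u with hs
  have hcard : s.card = k := by
    rw [hs, G.card_neighborFinset_eq_degree, ← hu]
  have e : {x // x ∈ s} ≃ Fin k := Fintype.equivFinOfCardEq (by rw [Fintype.card_coe, hcard])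
  set c0 : Fin k → V := fun i => ((e.symm i : {x // x ∈ s}) : V) with hc0
  have hc0mem : ∀ i, G.Adj u (c0 i) := fun i => (G.mem_neighborFinset u _).mp (e.symm i).2
  have hc0surj : ∀ v, G.Adj u v → ∃ i, c0 i = v := by
    intro v hv
    exact ⟨e ⟨v, (G.mem_neighborFinset u v).mpr hv⟩, by rw [hc0]; simp⟩
  have hk0 : 0 < k := by omega
  set i1 : Fin k := ⟨0, hk0⟩ with hi1
  set x1 : V := c0 i1 with hx1
  set c1 : Fin k → V := fun i => if i = i1 then u else c0 i with hc1
  have hdom : ∀ w, ∃ i, CRStep G (c0 i) w := by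
    intro w
    rcases reach_two G hG hd u w with h | h | ⟨x, hh1, hh2⟩
    · exact ⟨i1, Or.inr (h ▸ (hc0mem i1).symm)⟩
    · obtain ⟨i, hi⟩ := hc0surj w h
      exact ⟨i, Or.inl hi⟩
    · obtain ⟨i, hi⟩ := hc0surj x hh1
      exact ⟨i, Or.inr (hi ▸ hh2)⟩
  refine ⟨stratMax G c0 c1, ?_, ?_⟩
  · intro l o i
    cases l with
    | nil =>
      cases o with
      | none =>
        show CRStep G (c0 i) (c1 i)
        rw [hc1]
        by_cases hii : i = i1
        · simp only [if_pos hii]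
          exact Or.inr (hii ▸ (hc0mem i).symm)
        · simp only [if_neg hii]
          exact Or.inl rfl
      | some w => exact moveTo_step G c0 w i
    | cons a t =>
      cases a with
      | none =>
        cases t with
        | nil =>
          cases o with
          | none =>
            show CRStep G (c1 i) (c0 i)
            rw [hc1]
            by_cases hii : i = i1
            · simp only [if_pos hii]
              exact Or.inr (hii ▸ hc0mem i1)
            · simp only [if_neg hii]
              exact Or.inl rfl
          | some w => exact moveTo_step G c1 w i
        | cons b t' =>
          cases b with
          | none => exact Or.inl rfl
          | some w => exact Or.inl rfl
      | some w => exact Or.inl rfl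
  · intro r hr
    set F := stratMax G c0 c1 with hF
    have hobs0 : hObsList G F r 0 = [] := rfl
    have hF0 : F [] = c0 := rfl
    by_cases h0 : ∀ i, G.Adj (c0 i) (r 0)
    · -- robber invisible at time 0
      have hobs1 : hObsList G F r 1 = [none] := by
        show hObsList G F r 0 ++ [_] = _
        rw [hobs0, hF0, if_pos h0]
        rfl
      have hF1 : F (hObsList G F r 1) = c1 := by rw [hobs1]; rfl
      -- the robber's neighbourhood equals N(u)
      have hsub : G.neighborFinset u ⊆ G.neighborFinset (r 0) := by
        intro x hx
        obtain ⟨i, hi⟩ := hc0surj x ((G.mem_neighborFinset u x).mp hx)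
        exact (G.mem_neighborFinset _ _).mpr (hi ▸ (h0 i).symm)
      have hNeq : G.neighborFinset u = G.neighborFinset (r 0) := by
        refine Finset.eq_of_subset_of_card_le hsub ?_
        rw [G.card_neighborFinset_eq_degree, G.card_neighborFinset_eq_degree, ← hu]
        exact G.degree_le_maxDegree (r 0)
      by_cases h1 : ∃ i, c1 i = r 1
      · obtain ⟨i, hi⟩ := h1
        exact ⟨1, i, Or.inl (by rw [hF1]; exact hi)⟩
      · push_neg at h1
        -- the robber is at x1 or stayed at r 0
        have hx : r 1 = x1 ∨ r 1 = r 0 := by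
          rcases hr 0 with h | h
          · exact Or.inr h.symm
          · have hmem : r 1 ∈ G.neighborFinset u := by
              rw [hNeq]; exact (G.mem_neighborFinset _ _).mpr h
            obtain ⟨i, hi⟩ := hc0surj (r 1) ((G.mem_neighborFinset _ _).mp hmem)
            by_cases hii : i = i1
            · exact Or.inl (by rw [← hi, hii])
            · exact absurd (show c1 i = r 1 by rw [hc1]; simp only [if_neg hii]; exact hi)
                (h1 i)
        have hprobe : ∃ i, CRStep G (c1 i) (r 1) := by
          rcases hx with h | h
          · refine ⟨i1, Or.inr ?_⟩
            have : c1 i1 = u := by rw [hc1]; simp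
            rw [this, h, hx1]
            exact hc0mem i1
          · have hk1 : 1 < k := by omega
            set i2 : Fin k := ⟨1, hk1⟩ with hi2
            have hii : i2 ≠ i1 := by
              intro hc
              rw [hi2, hi1] at hc
              exact absurd (congrArg Fin.val hc) (by simp)
            refine ⟨i2, Or.inr ?_⟩
            have hc1i2 : c1 i2 = c0 i2 := by rw [hc1]; simp only [if_neg hii]
            rw [hc1i2, h]
            exact h0 i2
        by_cases hvis : ∀ i, G.Adj (c1 i) (r 1)
        · -- still invisible: the robber must be at x1, exposed by the probe
          have hru : G.Adj u (r 1) := by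
            have := hvis i1
            rwa [show c1 i1 = u by rw [hc1]; simp] at this
          obtain ⟨i, hi⟩ := hc0surj (r 1) hru
          have hii : i = i1 := by
            by_contra hc
            exact absurd (show c1 i = r 1 by rw [hc1]; simp only [if_neg hc]; exact hi) (h1 i)
          have hr1x1 : r 1 = x1 := by rw [← hi, hii]
          have hobs2 : hObsList G F r 2 = [none, none] := by
            show hObsList G F r 1 ++ [_] = _
            rw [hobs1]
            rw [show F [none] = c1 from rfl, if_pos hvis]
            rfl
          refine ⟨1, i1, Or.inr ?_⟩
          rw [hobs2]
          show c0 i1 = r 1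
          rw [hr1x1, hx1]
        · -- visible: a cop moves onto the robber
          have hobs2 : hObsList G F r 2 = [none, some (r 1)] := by
            show hObsList G F r 1 ++ [_] = _
            rw [hobs1]
            rw [show F [none] = c1 from rfl, if_neg hvis]
            rfl
          obtain ⟨i, hi⟩ := moveTo_hits G hprobe
          refine ⟨1, i, Or.inr ?_⟩
          rw [hobs2]
          exact hi
    · -- robber visible at time 0: a cop moves onto it
      have hobs1 : hObsList G F r 1 = [some (r 0)] := by
        show hObsList G F r 0 ++ [_] = _
        rw [hobs0, hF0, if_neg h0]
        rfl
      obtain ⟨i, hi⟩ := moveTo_hits G (hdom (r 0))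
      refine ⟨0, i, Or.inr ?_⟩
      rw [hobs1]
      exact hi

/-- If a finite connected graph `G` has diameter 2, then
`c_H(G) ≤ min {δ(G) + 1, Δ(G)}`. -/
theorem hyperopicCopNumber_le_of_diam_two {V : Type*} [Fintype V]
    (G : SimpleGraph V) [DecidableRel G.Adj] (hG : G.Connected) (hd : G.diam = 2) :
    hyperopicCopNumber G ≤ min (G.minDegree + 1) G.maxDegree := by
  rcases le_total (G.minDegree + 1) G.maxDegree with h | h
  · rw [min_eq_left h]
    exact Nat.sInf_le (hcopswin_minDegree G hG hd)
  · rw [min_eq_right h]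
    exact Nat.sInf_le (hcopswin_maxDegree G hG hd)
end

section
/- Let G be a finite connected graph and d a positive integer such that (1) G contains no copy of the complete bipartite graph K_{d,d+1} as a subgraph, and (2) d cops have a lonely winning strategy in the game of Cops and Robbers on G. Then c_H(G) ≤ d. -/
/-- `k` cops have a *lonely* winning strategy in Cops and Robbers on `G`: a winning
strategy such that in every play consistent with it, no two cops ever occupy the same
vertex at the end of a round (including the initial placement). -/
def LonelyCopsWin {V : Type*} (G : SimpleGraph V) (k : ℕ) : Prop :=
  ∃ F : List V → Fin k → V,
    (∀ l x i, CRStep G (F l i) (F (l ++ [x]) i)) ∧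
    ∀ r : ℕ → V, (∀ n, CRStep G (r n) (r (n + 1))) →
      (∀ n, Function.Injective fun i => F (robberHist r n) i) ∧
      ∃ n, ∃ i, F (robberHist r n) i = r n ∨ F (robberHist r (n + 1)) i = r n

/-- `H` is a minor of `G`: there are pairwise-disjoint nonempty connected branch sets in
`G`, indexed by the vertices of `H`, with an edge of `G` between the branch sets of every
pair of adjacent vertices of `H`. -/
def HasMinor {V W : Type*} (G : SimpleGraph V) (H : SimpleGraph W) : Prop :=
  ∃ B : W → Set V,
    (∀ w, (B w).Nonempty) ∧
    (∀ w, (G.induce (B w)).Connected) ∧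
    (Pairwise fun w w' => Disjoint (B w) (B w')) ∧
    ∀ ⦃w w'⦄, H.Adj w w' → ∃ u ∈ B w, ∃ v ∈ B w', G.Adj u v

/-- A graph is outerplanar iff it has no `K₄` minor and no `K_{2,3}` minor
(the minor-theoretic characterization of outerplanarity). -/
def Outerplanar {V : Type*} (G : SimpleGraph V) : Prop :=
  ¬ HasMinor G (⊤ : SimpleGraph (Fin 4)) ∧
    ¬ HasMinor G (completeBipartiteGraph (Fin 2) (Fin 3))

/-- A graph is planar iff it has no `K₅` minor and no `K_{3,3}` minor
(Wagner's characterization of planarity). -/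
def Planar {V : Type*} (G : SimpleGraph V) : Prop :=
  ¬ HasMinor G (⊤ : SimpleGraph (Fin 5)) ∧
    ¬ HasMinor G (completeBipartiteGraph (Fin 3) (Fin 3))



section Aux

lemma takeWhile_len_le {α : Type*} (p : α → Bool) (l : List α) :
    (l.takeWhile p).length ≤ l.length :=
  (List.takeWhile_sublist p).length_le

lemma takeWhile_append_of_ne {α : Type*} (p : α → Bool) (l t : List α)
    (h : l.takeWhile p ≠ l) : (l ++ t).takeWhile p = l.takeWhile p := by
  rw [List.takeWhile_append, if_neg]
  intro hlen
  exact h ((List.takeWhile_sublist p).eq_of_length hlen)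

lemma takeWhile_append_all {α : Type*} (p : α → Bool) (l t : List α)
    (h : ∀ a ∈ l, p a) : (l ++ t).takeWhile p = l ++ t.takeWhile p := by
  rw [List.takeWhile_append, if_pos]
  rw [List.takeWhile_eq_self_iff.mpr h]

end Aux

/-- Let `G` be a finite connected graph and `d` a positive integer such
that (1) `G` contains no copy of the complete bipartite graph `K_{d,d+1}`, and (2) `d`
cops have a lonely winning strategy in Cops and Robbers on `G`. Then `c_H(G) ≤ d`. -/
theorem hyperopicCopNumber_le_of_lonely {V : Type*} [Fintype V]
    (G : SimpleGraph V) (hG : G.Connected) (d : ℕ) (hd : 0 < d)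
    (hfree : ¬ ∃ X Y : Finset V, Disjoint X Y ∧ X.card = d ∧ Y.card = d + 1 ∧
      ∀ x ∈ X, ∀ y ∈ Y, G.Adj x y)
    (hlonely : LonelyCopsWin G d) :
    hyperopicCopNumber G ≤ d := by
  classical
  have hne : Nonempty V := hG.nonempty
  obtain ⟨F, hFstep, hFwin⟩ := hlonely
  -- the common neighbourhood of the cop positions
  set N : (Fin d → V) → Finset V :=
    fun c => Finset.univ.filter (fun v => ∀ i, G.Adj (c i) v) with hNdef
  have hmemN : ∀ c v, v ∈ N c ↔ ∀ i, G.Adj (c i) v := by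
    intro c v; simp [hNdef]
  have hcard : ∀ c : Fin d → V, Function.Injective c → (N c).card ≤ d := by
    intro c hc
    by_contra hlt
    push_neg at hlt
    obtain ⟨Y, hYsub, hYcard⟩ := Finset.exists_subset_card_eq (n := d + 1) hlt
    refine hfree ⟨Finset.univ.image c, Y, ?_, ?_, hYcard, ?_⟩
    · rw [Finset.disjoint_left]
      rintro x hx hxY
      obtain ⟨i, -, rfl⟩ := Finset.mem_image.mp hx
      exact G.irrefl (((hmemN c _).mp (hYsub hxY)) i)
    · rw [Finset.card_image_of_injective _ hc, Finset.card_univ, Fintype.card_fin]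
    · rintro x hx y hy
      obtain ⟨i, -, rfl⟩ := Finset.mem_image.mp hx
      exact ((hmemN c _).mp (hYsub hy)) i
  -- the "pounce" move: cover the common neighbourhood
  set pounce : (Fin d → V) → Fin d → V := fun c i =>
    if h : (N c).Nonempty then (N c).toList.getD i h.choose else c i with hpdef
  have hpounce_step : ∀ c i, CRStep G (c i) (pounce c i) := by
    intro c i
    by_cases h : (N c).Nonempty
    · right
      have hmem : pounce c i ∈ N c := by
        rw [hpdef]
        simp only [h, dif_pos]
        by_cases hi : (i : ℕ) < (N c).toList.length
        · rw [List.getD_eq_getElem _ _ hi]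
          exact Finset.mem_toList.mp (List.getElem_mem hi)
        · rw [List.getD_eq_default _ _ (not_lt.mp hi)]
          exact h.choose_spec
      exact (hmemN c _).mp hmem i
    · left
      rw [hpdef]; simp [h]
  have hpounce_surj : ∀ c, Function.Injective c → ∀ v ∈ N c, ∃ i, pounce c i = v := by
    intro c hc v hv
    have h : (N c).Nonempty := ⟨v, hv⟩
    obtain ⟨j, hj, hje⟩ := List.mem_iff_getElem.mp (Finset.mem_toList.mpr hv)
    have hjd : j < d := lt_of_lt_of_le (by simpa [Finset.length_toList] using hj) (hcard c hc)
    refine ⟨⟨j, hjd⟩, ?_⟩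
    rw [hpdef]
    simp only [h, dif_pos]
    rw [List.getD_eq_getElem _ _ (by simpa using hj)]
    exact hje
  -- extracting robber positions from observations
  set ext : Option V → V := fun o => o.getD (Classical.arbitrary V) with hextdef
  have hmapext : ∀ l : List V, (l.map some).map ext = l := by
    intro l; simp [hextdef, Function.comp_def]
  have hallsome : ∀ l : List V, (l.map some).takeWhile Option.isSome = l.map some :=
    fun l => List.takeWhile_eq_self_iff.mpr (by simp)
  -- the hyperopic strategy
  set FH : List (Option V) → Fin d → V := fun l =>
    if l.takeWhile Option.isSome = l then F (l.map ext)
    else pounce (F ((l.takeWhile Option.isSome).map ext)) with hFHdef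
  have hFH_some : ∀ l : List V, FH (l.map some) = F l := by
    intro l
    rw [hFHdef]
    simp only [if_pos (hallsome l), hmapext]
  have hFH_pounce : ∀ l : List V, FH (l.map some ++ [none]) = pounce (F l) := by
    intro l
    have h3 : (l.map some ++ [(none : Option V)]).takeWhile Option.isSome = l.map some := by
      rw [takeWhile_append_all _ _ _ (by simp)]
      simp
    have h4 : (l.map some ++ [(none : Option V)]).takeWhile Option.isSome ≠ l.map some ++ [none] := by
      rw [h3]
      intro hc
      have := congrArg List.length hc
      simp at this
    simp only [hFHdef]
    rw [if_neg h4, h3, hmapext]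
  refine Nat.sInf_le ?_
  refine ⟨FH, ?_, ?_⟩
  · -- legality of moves
    intro l o i
    by_cases hl : l.takeWhile Option.isSome = l
    · match o with
      | some x =>
        have h2 : (l ++ [some x]).takeWhile Option.isSome = l ++ [some x] := by
          refine List.takeWhile_eq_self_iff.mpr ?_
          intro a ha
          rcases List.mem_append.mp ha with h | h
          · exact List.takeWhile_eq_self_iff.mp hl a h
          · simp only [List.mem_singleton] at h
            subst h; rfl
        simp only [hFHdef]
        rw [if_pos hl, if_pos h2, List.map_append]
        exact hFstep _ _ i
      | none =>
        have h3 : (l ++ [(none : Option V)]).takeWhile Option.isSome = l := by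
          rw [takeWhile_append_all _ _ _ (fun a ha => List.takeWhile_eq_self_iff.mp hl a ha)]
          simp
        have h4 : (l ++ [(none : Option V)]).takeWhile Option.isSome ≠ l ++ [none] := by
          rw [h3]
          intro hc
          have := congrArg List.length hc
          simp at this
        simp only [hFHdef]
        rw [if_pos hl, if_neg h4, h3]
        exact hpounce_step _ i
    · have h3 := takeWhile_append_of_ne Option.isSome l [o] hl
      have h4 : (l ++ [o]).takeWhile Option.isSome ≠ l ++ [o] := by
        rw [h3]
        intro hc
        have h5 := congrArg List.length hc
        have h6 := takeWhile_len_le Option.isSome l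
        rw [h5] at h6
        simp at h6
      simp only [hFHdef]
      rw [if_neg hl, if_neg h4, h3]
      exact Or.inl rfl
  · -- winning
    intro r hr
    obtain ⟨hinj, hwinF⟩ := hFwin r hr
    set obs : ℕ → List (Option V) := hObsList G FH r with hobs
    have hist_succ : ∀ n, robberHist r (n + 1) = robberHist r n ++ [r n] := by
      intro n; simp [robberHist, List.range_succ]
    have hobs_succ : ∀ n, obs (n + 1) =
        obs n ++ [if ∀ i, G.Adj (FH (obs n) i) (r n) then none else some (r n)] := by
      intro n; rfl
    have hobs_eq : ∀ n, (∀ k < n, ¬ ∀ i, G.Adj (FH (obs k) i) (r k)) →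
        obs n = (robberHist r n).map some := by
      intro n
      induction n with
      | zero => intro _; simp [hobs, hObsList, robberHist]
      | succ n ih =>
        intro h
        have h1 := ih (fun k hk => h k (Nat.lt_succ_of_lt hk))
        rw [hobs_succ, if_neg (h n (Nat.lt_succ_self n)), h1, hist_succ, List.map_append,
          List.map_cons, List.map_nil]
    by_cases hInv : ∃ n, ∀ i, G.Adj (FH (obs n) i) (r n)
    · set m := Nat.find hInv with hm
      have hmin : ∀ k < m, ¬ ∀ i, G.Adj (FH (obs k) i) (r k) :=
        fun k hk => Nat.find_min hInv hk
      have hOm := hobs_eq m hmin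
      have hFHm : FH (obs m) = F (robberHist r m) := by rw [hOm]; exact hFH_some _
      have hinvm : ∀ i, G.Adj (FH (obs m) i) (r m) := Nat.find_spec hInv
      rw [hFHm] at hinvm
      have hcinj : Function.Injective (F (robberHist r m)) := hinj m
      have hrm : r m ∈ N (F (robberHist r m)) := (hmemN _ _).mpr hinvm
      obtain ⟨i, hi⟩ := hpounce_surj _ hcinj (r m) hrm
      refine ⟨m, i, Or.inr ?_⟩
      have h2 : obs (m + 1) = obs m ++ [none] := by
        rw [hobs_succ, hFHm, if_pos hinvm]
      show FH (obs (m + 1)) i = r m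
      rw [h2, hOm, hFH_pounce]
      exact hi
    · push_neg at hInv
      have hobs_all : ∀ n, obs n = (robberHist r n).map some := by
        intro n
        refine hobs_eq n (fun k _ hadj => ?_)
        obtain ⟨i, hi⟩ := hInv k
        exact hi (hadj i)
      obtain ⟨n, i, hw⟩ := hwinF
      refine ⟨n, i, ?_⟩
      show FH (obs n) i = r n ∨ FH (obs (n + 1)) i = r n
      rw [hobs_all n, hobs_all (n + 1), hFH_some, hFH_some]
      exact hw
end
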